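/- arXiv:2001.02353 — 4 statements merged into one kernel-verified Lean document; each statement's English description precedes it below -/
import Mathlib

section
/- Let m ≥ 2 with b_m > 0, and define B_m(u) = Σ_{j≠m} b_j u^j for u ∈ [0,1] and B_m'(u) = Σ_{j≠m, j≥1} j b_j u^{j−1}. Then ρ_0 := min{u ∈ [0,1] : B_m(u) = 0} exists, ρ_0 < 1, and B_m'(ρ_0) < 0. Defining ρ_1 = −b_m ρ_0^m / B_m'(ρ_0) and, for k ≥ 1, ρ_{k+1} = −( Σ_{i≥0, i≠1, i≠m} b_i Σ_{j_1+⋯+j_i=k+1, each j_s ≤ k} ρ_{j_1}⋯ρ_{j_i} + b_m ρ^{*(m)}_{k} ) / B_m'(ρ_0), where ρ^{*(m)}_{k} = Σ_{j_1+⋯+j_m=k} ρ_{j_1}⋯ρ_{j_m}, one has: ρ_k ≥ 0 for all k; for every v ∈ [0,1] the series Σ_{k=0}^∞ ρ_k v^k converges and its sum equals the minimal nonnegative root in [0,1] of the equation B_m(u) + b_m v u^m = 0 in the unknown u; and Σ_{k=0}^∞ ρ_k = ρ. -/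
open Finset

namespace Stmt12Aux

lemma pow_sub_pow_ge {x y : ℝ} (hx : 0 ≤ x) (hxy : x ≤ y) (j : ℕ) :
    (j:ℝ) * x ^ (j-1) * (y - x) ≤ y ^ j - x ^ j := by
  rw [← geom_sum₂_mul y x j]
  apply mul_le_mul_of_nonneg_right _ (by linarith)
  calc (j:ℝ) * x ^ (j-1) = ∑ _i ∈ range j, x ^ (j-1) := by
        rw [Finset.sum_const, Finset.card_range, nsmul_eq_mul]
    _ ≤ ∑ i ∈ range j, y ^ i * x ^ (j-1-i) := by
        apply Finset.sum_le_sum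
        intro i hi
        rw [Finset.mem_range] at hi
        have hij : i + (j - 1 - i) = j - 1 := by omega
        calc x ^ (j-1) = x ^ i * x ^ (j-1-i) := by rw [← pow_add, hij]
          _ ≤ y ^ i * x ^ (j-1-i) :=
            mul_le_mul_of_nonneg_right (pow_le_pow_left₀ hx hxy i) (pow_nonneg hx _)

lemma summable_nat_mul_pow {q : ℝ} (h0 : 0 ≤ q) (h1 : q < 1) :
    Summable (fun j : ℕ => (j:ℝ) * q ^ (j-1)) := by
  rw [← summable_nat_add_iff 1]
  simp only [Nat.add_sub_cancel]
  have h1' : ‖q‖ < 1 := by rwa [Real.norm_eq_abs, abs_of_nonneg h0]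
  have h2 := summable_pow_mul_geometric_of_norm_lt_one 1 h1'
  have h3 := summable_geometric_of_lt_one h0 h1
  have := h2.add h3
  apply this.congr
  intro n
  push_cast
  ring

lemma sum_piFinset_pow (r : ℕ → ℝ) (v : ℝ) (i N : ℕ) :
    ∑ t ∈ Fintype.piFinset (fun _ : Fin i => range (N+1)),
      ((∏ s, r (t s)) * v ^ (∑ s, t s))
    = (∑ k ∈ range (N+1), r k * v ^ k) ^ i := by
  have h1 : (∑ k ∈ range (N+1), r k * v ^ k) ^ i
      = ∏ _s : Fin i, (∑ k ∈ range (N+1), r k * v ^ k) := by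
    rw [Finset.prod_const, Finset.card_univ, Fintype.card_fin]
  rw [h1, Finset.prod_univ_sum]
  apply Finset.sum_congr rfl
  intro t _
  rw [Finset.prod_mul_distrib, Finset.prod_pow_eq_pow_sum]

/-- The union over `k ≤ N` of filtered antidiagonal tuples for `∑ = k+1`. -/
def UU (i N : ℕ) : Finset (Fin i → ℕ) :=
  (range (N+1)).biUnion fun k =>
    (Finset.Nat.antidiagonalTuple i (k+1)).filter (fun t => ∀ s, t s ≤ k)

lemma sum_UU (r : ℕ → ℝ) (v : ℝ) (i N : ℕ) :
    ∑ t ∈ UU i N, ((∏ s, r (t s)) * v ^ (∑ s, t s))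
    = ∑ k ∈ range (N+1), v ^ (k+1) *
        ∑ t ∈ (Finset.Nat.antidiagonalTuple i (k+1)).filter (fun t => ∀ s, t s ≤ k),
          ∏ s, r (t s) := by
  rw [UU, Finset.sum_biUnion]
  · apply Finset.sum_congr rfl
    intro k _
    rw [Finset.mul_sum]
    apply Finset.sum_congr rfl
    intro t ht
    rw [Finset.mem_filter] at ht
    have hsum : ∑ s, t s = k + 1 := Finset.Nat.mem_antidiagonalTuple.mp ht.1
    rw [hsum]
    ring
  · intro a _ b _ hab
    simp only [Function.onFun, Finset.disjoint_left]
    intro t hta htb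
    rw [Finset.mem_filter, Finset.Nat.mem_antidiagonalTuple] at hta htb
    omega


/-- image of single-entry tuples -/
def Sing (i E : ℕ) : Finset (Fin i → ℕ) :=
  (Finset.univ ×ˢ Ico 1 (E+1)).image (fun p : Fin i × ℕ => Pi.single p.1 p.2)

lemma sing_inj (i E : ℕ) : ∀ x ∈ (Finset.univ ×ˢ Ico 1 (E+1)),
    ∀ y ∈ (Finset.univ ×ˢ Ico 1 (E+1)),
    (Pi.single x.1 x.2 : Fin i → ℕ) = Pi.single y.1 y.2 → x = y := by
  intro x hx y hy h
  rw [Finset.mem_product, Finset.mem_Ico] at hx hy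
  have h1 := congrFun h x.1
  rw [Pi.single_eq_same, Pi.single_apply] at h1
  by_cases he : x.1 = y.1
  · rw [if_pos he] at h1
    exact Prod.ext he h1
  · rw [if_neg he] at h1
    omega

lemma sum_sing (r : ℕ → ℝ) (v : ℝ) (i E : ℕ) :
    ∑ t ∈ Sing i E, ((∏ s, r (t s)) * v ^ (∑ s, t s))
    = (i:ℝ) * (r 0) ^ (i-1) * ∑ e ∈ Ico 1 (E+1), r e * v ^ e := by
  rw [Sing, Finset.sum_image (sing_inj i E), Finset.sum_product]
  have hw : ∀ (s₀ : Fin i) (e : ℕ),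
      ((∏ s, r ((Pi.single s₀ e : Fin i → ℕ) s)) * v ^ (∑ s, (Pi.single s₀ e : Fin i → ℕ) s))
      = (r 0)^(i-1) * (r e * v ^ e) := by
    intro s₀ e
    have hsum : (∑ s, (Pi.single s₀ e : Fin i → ℕ) s) = e := by
      rw [Finset.sum_pi_single']; simp
    have hprod : (∏ s, r ((Pi.single s₀ e : Fin i → ℕ) s)) = r e * (r 0)^(i-1) := by
      rw [← Finset.mul_prod_erase Finset.univ _ (Finset.mem_univ s₀), Pi.single_eq_same]
      congr 1
      have hc : ∀ s ∈ Finset.univ.erase s₀, r ((Pi.single s₀ e : Fin i → ℕ) s) = r 0 := by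
        intro s hs
        rw [Pi.single_apply, if_neg (Finset.mem_erase.mp hs).1]
      rw [Finset.prod_congr rfl hc, Finset.prod_const,
        Finset.card_erase_of_mem (Finset.mem_univ s₀), Finset.card_univ, Fintype.card_fin]
    rw [hsum, hprod]; ring
  calc ∑ s₀ : Fin i, ∑ e ∈ Ico 1 (E+1),
        ((∏ s, r ((Pi.single s₀ e : Fin i → ℕ) s)) * v ^ (∑ s, (Pi.single s₀ e : Fin i → ℕ) s))
      = ∑ _s₀ : Fin i, ((r 0)^(i-1) * ∑ e ∈ Ico 1 (E+1), (r e * v ^ e)) := by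
        apply Finset.sum_congr rfl; intro s₀ _
        rw [Finset.mul_sum]
        exact Finset.sum_congr rfl fun e _ => hw s₀ e
    _ = (i:ℝ) * (r 0) ^ (i-1) * ∑ e ∈ Ico 1 (E+1), r e * v ^ e := by
        rw [Finset.sum_const, Finset.card_univ, Fintype.card_fin, nsmul_eq_mul]; ring

lemma zero_notmem_sing (i E : ℕ) : (0 : Fin i → ℕ) ∉ Sing i E := by
  rw [Sing, Finset.mem_image]
  rintro ⟨p, hp, h⟩
  rw [Finset.mem_product, Finset.mem_Ico] at hp
  have := congrFun h p.1
  rw [Pi.single_eq_same] at this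
  simp only [Pi.zero_apply] at this
  omega


end Stmt12Aux
namespace T3
open Stmt12Aux

section
variable (r : ℕ → ℝ) (v : ℝ) (hr : ∀ k, 0 ≤ r k) (hv : 0 ≤ v)

include hr hv in
lemma w_nonneg (t : Fin i → ℕ) : 0 ≤ (∏ s, r (t s)) * v ^ (∑ s, t s) :=
  mul_nonneg (Finset.prod_nonneg fun s _ => hr _) (pow_nonneg hv _)

lemma UU_subset (i N : ℕ) :
    UU i N ⊆ Fintype.piFinset (fun _ : Fin i => range (N+1)) := by
  intro t ht
  rw [UU, Finset.mem_biUnion] at ht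
  obtain ⟨k, hk, ht⟩ := ht
  rw [Finset.mem_filter] at ht
  rw [Finset.mem_range] at hk
  rw [Fintype.mem_piFinset]
  intro s
  rw [Finset.mem_range]
  have := ht.2 s
  omega

lemma sing_subset (i N : ℕ) :
    Sing i N ⊆ Fintype.piFinset (fun _ : Fin i => range (N+1)) := by
  intro t ht
  rw [Sing, Finset.mem_image] at ht
  obtain ⟨p, hp, rfl⟩ := ht
  rw [Finset.mem_product, Finset.mem_Ico] at hp
  rw [Fintype.mem_piFinset]
  intro s
  rw [Finset.mem_range, Pi.single_apply]
  split <;> omega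

lemma zero_mem_piFinset (i N : ℕ) :
    (0 : Fin i → ℕ) ∈ Fintype.piFinset (fun _ : Fin i => range (N+1)) := by
  rw [Fintype.mem_piFinset]
  intro s
  rw [Finset.mem_range]
  simp

lemma disjoint_UU_Z (i N E : ℕ) :
    Disjoint (UU i N) (insert 0 (Sing i E)) := by
  rw [Finset.disjoint_left]
  intro t ht htz
  rw [UU, Finset.mem_biUnion] at ht
  obtain ⟨k, hk, ht⟩ := ht
  rw [Finset.mem_filter, Finset.Nat.mem_antidiagonalTuple] at ht
  rw [Finset.mem_insert] at htz
  rcases htz with rfl | htz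
  · simp at ht
  · rw [Sing, Finset.mem_image] at htz
    obtain ⟨p, hp, rfl⟩ := htz
    rw [Finset.mem_product, Finset.mem_Ico] at hp
    have h1 : (∑ s, (Pi.single p.1 p.2 : Fin i → ℕ) s) = p.2 := by
      rw [Finset.sum_pi_single']; simp
    have h2 := ht.2 p.1
    rw [Pi.single_eq_same] at h2
    omega

lemma w_zero_tuple (i : ℕ) :
    ((∏ s, r ((0 : Fin i → ℕ) s)) * v ^ (∑ s, (0 : Fin i → ℕ) s)) = r 0 ^ i := by
  simp [Finset.prod_const, Finset.card_univ]

include hr hv in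
lemma sum_UU_add_le (i N : ℕ) :
    (∑ t ∈ UU i N, ((∏ s, r (t s)) * v ^ (∑ s, t s)))
      + ((r 0)^i + (i:ℝ) * (r 0)^(i-1) * ∑ e ∈ Ico 1 (N+1), r e * v ^ e)
    ≤ (∑ k ∈ range (N+1), r k * v ^ k) ^ i := by
  rw [← sum_piFinset_pow]
  have h1 : ∑ t ∈ insert 0 (Sing i N), ((∏ s, r (t s)) * v ^ (∑ s, t s))
      = (r 0)^i + (i:ℝ) * (r 0)^(i-1) * ∑ e ∈ Ico 1 (N+1), r e * v ^ e := by
    rw [Finset.sum_insert (zero_notmem_sing i N), sum_sing, w_zero_tuple]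
  rw [← h1, ← Finset.sum_union (disjoint_UU_Z i N N)]
  apply Finset.sum_le_sum_of_subset_of_nonneg
  · apply Finset.union_subset (UU_subset i N)
    apply Finset.insert_subset (zero_mem_piFinset i N) (sing_subset i N)
  · intro t _ _
    exact w_nonneg r v hr hv t

include hr hv in
lemma le_sum_UU (i N N' : ℕ) (hNN : i * N' ≤ N + 1) :
    (∑ k ∈ range (N'+1), r k * v ^ k) ^ i
      - ((r 0)^i + (i:ℝ) * (r 0)^(i-1) * ∑ e ∈ Ico 1 (N'+1), r e * v ^ e)
    ≤ ∑ t ∈ UU i N, ((∏ s, r (t s)) * v ^ (∑ s, t s)) := by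
  have hZS : insert 0 (Sing i N') ⊆ Fintype.piFinset (fun _ : Fin i => range (N'+1)) :=
    Finset.insert_subset (zero_mem_piFinset i N') (sing_subset i N')
  have hZ_sum : ∑ t ∈ insert 0 (Sing i N'), ((∏ s, r (t s)) * v ^ (∑ s, t s))
      = (r 0)^i + (i:ℝ) * (r 0)^(i-1) * ∑ e ∈ Ico 1 (N'+1), r e * v ^ e := by
    rw [Finset.sum_insert (zero_notmem_sing i N'), sum_sing, w_zero_tuple]
  rw [← sum_piFinset_pow, ← hZ_sum, ← Finset.sum_sdiff_eq_sub hZS]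
  apply Finset.sum_le_sum_of_subset_of_nonneg
  · -- S' \ Z' ⊆ UU i N
    intro t ht
    rw [Finset.mem_sdiff] at ht
    obtain ⟨htS, htZ⟩ := ht
    rw [Fintype.mem_piFinset] at htS
    have htle : ∀ s, t s ≤ N' := fun s => by
      have := htS s; rw [Finset.mem_range] at this; omega
    rw [Finset.mem_insert] at htZ
    push_neg at htZ
    obtain ⟨ht0, htsing⟩ := htZ
    have h1 : ∃ s₀, t s₀ ≠ 0 := by
      by_contra h; push_neg at h
      exact ht0 (funext h)
    obtain ⟨s₀, hs₀⟩ := h1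
    have h2 : ∃ s₁, s₁ ≠ s₀ ∧ t s₁ ≠ 0 := by
      by_contra h; push_neg at h
      apply htsing
      rw [Sing, Finset.mem_image]
      refine ⟨(s₀, t s₀), ?_, ?_⟩
      · rw [Finset.mem_product, Finset.mem_Ico]
        refine ⟨Finset.mem_univ _, by omega, by have := htle s₀; omega⟩
      · funext s
        rw [Pi.single_apply]
        split
        · next hss => rw [hss]
        · next hss => exact (h s hss).symm
    obtain ⟨s₁, hs₁ne, hs₁⟩ := h2
    have hTle : (∑ s, t s) ≤ i * N' := by
      calc (∑ s, t s) ≤ ∑ _s : Fin i, N' := Finset.sum_le_sum fun s _ => htle s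
        _ = i * N' := by rw [Finset.sum_const, Finset.card_univ, Fintype.card_fin, smul_eq_mul]
    have hpair : ∀ s, t s + 1 ≤ ∑ s', t s' := by
      intro s
      rcases eq_or_ne s s₀ with h | h
      · have hsub : ({s, s₁} : Finset (Fin i)) ⊆ Finset.univ := Finset.subset_univ _
        have := Finset.sum_le_sum_of_subset hsub (f := t)
        rw [Finset.sum_pair (by rw [h]; exact hs₁ne.symm)] at this
        omega
      · have hsub : ({s, s₀} : Finset (Fin i)) ⊆ Finset.univ := Finset.subset_univ _
        have := Finset.sum_le_sum_of_subset hsub (f := t)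
        rw [Finset.sum_pair h] at this
        omega
    rw [UU, Finset.mem_biUnion]
    refine ⟨(∑ s, t s) - 1, ?_, ?_⟩
    · rw [Finset.mem_range]
      have := hpair s₀
      omega
    · rw [Finset.mem_filter, Finset.Nat.mem_antidiagonalTuple]
      have h3 : (∑ s, t s) - 1 + 1 = ∑ s, t s := by
        have := hpair s₀; omega
      refine ⟨h3.symm, fun s => by have := hpair s; omega⟩
  · intro t _ _
    exact w_nonneg r v hr hv t

/-- WW for the m-part -/
lemma sum_WW (m N : ℕ) :
    ∑ t ∈ (range (N+1)).biUnion (fun k => Finset.Nat.antidiagonalTuple m k),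
        ((∏ s, r (t s)) * v ^ (∑ s, t s))
    = ∑ k ∈ range (N+1), v ^ k * ∑ t ∈ Finset.Nat.antidiagonalTuple m k, ∏ s, r (t s) := by
  rw [Finset.sum_biUnion]
  · apply Finset.sum_congr rfl
    intro k _
    rw [Finset.mul_sum]
    apply Finset.sum_congr rfl
    intro t ht
    rw [Finset.Nat.mem_antidiagonalTuple.mp ht]
    ring
  · intro a _ b _ hab
    simp only [Function.onFun, Finset.disjoint_left]
    intro t hta htb
    rw [Finset.Nat.mem_antidiagonalTuple] at hta htb
    omega

include hr hv in
lemma sum_WW_le (m N : ℕ) :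
    ∑ t ∈ (range (N+1)).biUnion (fun k => Finset.Nat.antidiagonalTuple m k),
        ((∏ s, r (t s)) * v ^ (∑ s, t s))
    ≤ (∑ k ∈ range (N+1), r k * v ^ k) ^ m := by
  rw [← sum_piFinset_pow]
  apply Finset.sum_le_sum_of_subset_of_nonneg
  · intro t ht
    rw [Finset.mem_biUnion] at ht
    obtain ⟨k, hk, ht⟩ := ht
    rw [Finset.Nat.mem_antidiagonalTuple] at ht
    rw [Finset.mem_range] at hk
    rw [Fintype.mem_piFinset]
    intro s
    rw [Finset.mem_range]
    have : t s ≤ ∑ s', t s' := Finset.single_le_sum (fun s' _ => Nat.zero_le _) (Finset.mem_univ s)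
    omega
  · intro t _ _; exact w_nonneg r v hr hv t

include hr hv in
lemma le_sum_WW (m N N' : ℕ) (hNN : m * N' ≤ N) :
    (∑ k ∈ range (N'+1), r k * v ^ k) ^ m
    ≤ ∑ t ∈ (range (N+1)).biUnion (fun k => Finset.Nat.antidiagonalTuple m k),
        ((∏ s, r (t s)) * v ^ (∑ s, t s)) := by
  rw [← sum_piFinset_pow]
  apply Finset.sum_le_sum_of_subset_of_nonneg
  · intro t ht
    rw [Fintype.mem_piFinset] at ht
    have htle : ∀ s, t s ≤ N' := fun s => by
      have := ht s; rw [Finset.mem_range] at this; omega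
    rw [Finset.mem_biUnion]
    refine ⟨∑ s, t s, ?_, Finset.Nat.mem_antidiagonalTuple.mpr rfl⟩
    rw [Finset.mem_range]
    have : (∑ s, t s) ≤ m * N' := by
      calc (∑ s, t s) ≤ ∑ _s : Fin m, N' := Finset.sum_le_sum fun s _ => htle s
        _ = m * N' := by rw [Finset.sum_const, Finset.card_univ, Fintype.card_fin, smul_eq_mul]
    omega
  · intro t _ _; exact w_nonneg r v hr hv t

end
end T3

open Stmt12Aux T3 Finset Topology Filter in
theorem stmt_12 (b : ℕ → ℝ)
    (hb_nonneg : ∀ j, j ≠ 1 → 0 ≤ b j) (hb1 : b 1 < 0)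
    (hb_sum : Summable b) (hb_total : ∑' j, b j = 0)
    (ρ : ℝ) (hρ : IsLeast {u ∈ Set.Icc (0:ℝ) 1 | (∑' j : ℕ, b j * u ^ j) = 0} ρ)
    (m : ℕ) (hm : 2 ≤ m) (hbm : 0 < b m) :
    ∃ ρ0 : ℝ,
      IsLeast {u ∈ Set.Icc (0:ℝ) 1 |
        (∑' j : ℕ, if j = m then 0 else b j * u ^ j) = 0} ρ0 ∧
      ρ0 < 1 ∧
      (∑' j : ℕ, if j = m then 0 else (j : ℝ) * b j * ρ0 ^ (j - 1)) < 0 ∧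
      ∀ r : ℕ → ℝ,
        r 0 = ρ0 →
        r 1 = -(b m * ρ0 ^ m) /
          (∑' j : ℕ, if j = m then 0 else (j : ℝ) * b j * ρ0 ^ (j - 1)) →
        (∀ k, 1 ≤ k → r (k + 1) =
          -((∑' i : ℕ, if i = 1 ∨ i = m then 0 else
              b i * ∑ t ∈ (Finset.Nat.antidiagonalTuple i (k + 1)).filter
                  (fun t => ∀ s, t s ≤ k), ∏ s, r (t s))
            + b m * ∑ t ∈ Finset.Nat.antidiagonalTuple m k, ∏ s, r (t s)) /
          (∑' j : ℕ, if j = m then 0 else (j : ℝ) * b j * ρ0 ^ (j - 1))) →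
        (∀ k, 0 ≤ r k) ∧
        (∀ v ∈ Set.Icc (0:ℝ) 1, ∃ s : ℝ,
          IsLeast {u ∈ Set.Icc (0:ℝ) 1 |
            (∑' j : ℕ, if j = m then 0 else b j * u ^ j) + b m * v * u ^ m = 0} s ∧
          HasSum (fun k : ℕ => r k * v ^ k) s) ∧
        HasSum r ρ := by
  classical
  have hm1 : m ≠ 1 := by omega
  have hm0 : m ≠ 0 := by omega
  set c : ℕ → ℝ := fun j => if j = m then 0 else b j with hc_def
  have habs : Summable (fun j => |b j|) := summable_abs_iff.mpr hb_sum
  have hc_nonneg : ∀ j, j ≠ 1 → 0 ≤ c j := by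
    intro j hj
    simp only [hc_def]
    split
    · exact le_refl 0
    · exact hb_nonneg j hj
  have hc_abs : ∀ j, |c j| ≤ |b j| := by
    intro j
    simp only [hc_def]
    split
    · simp [abs_nonneg]
    · exact le_refl _
  have hcsum : Summable c :=
    Summable.of_norm_bounded habs (fun j => by simpa [Real.norm_eq_abs] using hc_abs j)
  have hcu : ∀ u : ℝ, 0 ≤ u → u ≤ 1 → Summable (fun j => c j * u ^ j) := by
    intro u h0 h1
    apply Summable.of_norm_bounded habs
    intro j
    rw [Real.norm_eq_abs, abs_mul, abs_pow, abs_of_nonneg h0]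
    calc |c j| * u ^ j ≤ |b j| * 1 :=
          mul_le_mul (hc_abs j) (pow_le_one₀ h0 h1) (pow_nonneg h0 j) (abs_nonneg _)
      _ = |b j| := mul_one _
  have hbu : ∀ u : ℝ, 0 ≤ u → u ≤ 1 → Summable (fun j => b j * u ^ j) := by
    intro u h0 h1
    apply Summable.of_norm_bounded habs
    intro j
    rw [Real.norm_eq_abs, abs_mul, abs_pow, abs_of_nonneg h0]
    calc |b j| * u ^ j ≤ |b j| * 1 :=
          mul_le_mul_of_nonneg_left (pow_le_one₀ h0 h1) (abs_nonneg _)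
      _ = |b j| := mul_one _
  set Bm : ℝ → ℝ := fun u => ∑' j, c j * u ^ j with hBm_def
  have hBm_eq : ∀ u : ℝ, (∑' j : ℕ, if j = m then 0 else b j * u ^ j) = Bm u := by
    intro u
    apply tsum_congr
    intro j
    simp only [hc_def]
    split <;> simp
  have hBm0 : Bm 0 = b 0 := by
    have h := tsum_eq_single (L := SummationFilter.unconditional ℕ) (f := fun j => c j * (0:ℝ) ^ j) 0
      (fun j hj => by simp [zero_pow hj])
    simp only [hBm_def]
    rw [h]
    simp only [pow_zero, mul_one, hc_def]
    rw [if_neg (Ne.symm hm0)]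
  have hctot : ∑' j, c j = - b m := by
    have h2 : Summable (fun j => if j = m then b m else 0) :=
      (hasSum_ite_eq m (b m)).summable
    have h3 : ∑' j : ℕ, b j = (∑' j, c j) + b m := by
      have h4 : ∑' j : ℕ, (if j = m then b m else 0 : ℝ) = b m := tsum_ite_eq m (fun _ => b m)
      rw [← h4, ← Summable.tsum_add hcsum h2]
      apply tsum_congr
      intro j
      by_cases hj : j = m
      · simp [hc_def, hj]
      · simp [hc_def, hj]
    rw [hb_total] at h3
    linarith
  have hBm1 : Bm 1 = - b m := by
    simp only [hBm_def, one_pow, mul_one]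
    exact hctot
  have hBm_contOn : ContinuousOn Bm (Set.Icc 0 1) := by
    set π : ℝ → ℝ := fun u => max 0 (min u 1) with hπ_def
    have hπcont : Continuous π := continuous_const.max (continuous_id.min continuous_const)
    have hπmem : ∀ u, 0 ≤ π u ∧ π u ≤ 1 := fun u =>
      ⟨le_max_left _ _, max_le zero_le_one (min_le_right _ _)⟩
    have hG : Continuous (fun u => ∑' j, c j * (π u) ^ j) := by
      apply continuous_tsum (fun j => by fun_prop) habs
      intro j u
      rw [Real.norm_eq_abs, abs_mul, abs_pow, abs_of_nonneg (hπmem u).1]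
      calc |c j| * (π u) ^ j ≤ |b j| * 1 :=
            mul_le_mul (hc_abs j) (pow_le_one₀ (hπmem u).1 (hπmem u).2)
              (pow_nonneg (hπmem u).1 j) (abs_nonneg _)
        _ = |b j| := mul_one _
    apply ContinuousOn.congr hG.continuousOn
    intro u hu
    have hπu : π u = u := by
      simp only [hπ_def]
      rw [min_eq_left hu.2, max_eq_right hu.1]
    simp only [hBm_def, hπu]
  -- least roots of B_m(u) + b_m v u^m
  have hroot : ∀ v : ℝ, 0 ≤ v → v ≤ 1 →
      ∃ s, IsLeast {u ∈ Set.Icc (0:ℝ) 1 | Bm u + b m * v * u ^ m = 0} s := by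
    intro v hv0 hv1
    set F : ℝ → ℝ := fun u => Bm u + b m * v * u ^ m with hF_def
    have hFcont : ContinuousOn F (Set.Icc 0 1) :=
      hBm_contOn.add (Continuous.continuousOn (by fun_prop))
    have hF1 : F 1 ≤ 0 := by
      simp only [hF_def, hBm1, one_pow, mul_one]
      nlinarith
    have hF0 : 0 ≤ F 0 := by
      simp only [hF_def, hBm0, zero_pow hm0, mul_zero, add_zero]
      exact hb_nonneg 0 (by omega)
    have hmem : (0:ℝ) ∈ Set.Icc (F 1) (F 0) := ⟨hF1, hF0⟩
    obtain ⟨x, hx, hFx⟩ := intermediate_value_Icc' (by norm_num : (0:ℝ) ≤ 1) hFcont hmem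
    have hseteq : {u ∈ Set.Icc (0:ℝ) 1 | F u = 0} = Set.Icc (0:ℝ) 1 ∩ F ⁻¹' {0} := by
      ext u
      simp [Set.mem_sep_iff, Set.mem_preimage]
    have hclosed : IsClosed {u ∈ Set.Icc (0:ℝ) 1 | F u = 0} := by
      rw [hseteq]
      exact hFcont.preimage_isClosed_of_isClosed isClosed_Icc isClosed_singleton
    have hcpt : IsCompact {u ∈ Set.Icc (0:ℝ) 1 | F u = 0} :=
      IsCompact.of_isClosed_subset isCompact_Icc hclosed (fun u hu => hu.1)
    exact hcpt.exists_isLeast ⟨x, hx, hFx⟩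
  obtain ⟨ρ0, hρ0least0⟩ := hroot 0 le_rfl zero_le_one
  have hρ0least : IsLeast {u ∈ Set.Icc (0:ℝ) 1 | Bm u = 0} ρ0 := by
    have : {u ∈ Set.Icc (0:ℝ) 1 | Bm u + b m * 0 * u ^ m = 0}
        = {u ∈ Set.Icc (0:ℝ) 1 | Bm u = 0} := by
      ext u; simp
    rwa [this] at hρ0least0
  obtain ⟨⟨hρ0mem, hBmρ0⟩, hρ0lb⟩ := hρ0least
  have hρ00 : 0 ≤ ρ0 := hρ0mem.1
  have hρ01 : ρ0 ≤ 1 := hρ0mem.2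
  have hρ0lt1 : ρ0 < 1 := by
    rcases lt_or_eq_of_le hρ01 with h | h
    · exact h
    · exfalso
      rw [h, hBm1] at hBmρ0
      linarith
  have hjpos : ∀ j : ℕ, (0:ℝ) ≤ (j:ℝ) * ρ0 ^ (j-1) :=
    fun j => mul_nonneg (Nat.cast_nonneg _) (pow_nonneg hρ00 _)
  have hjb : Summable (fun j : ℕ => |b j| * ((j:ℝ) * ρ0 ^ (j-1))) := by
    have hbC : ∀ j, |b j| ≤ ∑' i, |b i| := fun j => Summable.le_tsum habs j (fun _ _ => abs_nonneg _)
    exact Summable.of_nonneg_of_le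
      (fun j => mul_nonneg (abs_nonneg _) (hjpos j))
      (fun j => mul_le_mul_of_nonneg_right (hbC j) (hjpos j))
      ((summable_nat_mul_pow hρ00 hρ0lt1).mul_left _)
  have hDsum : Summable (fun j : ℕ => (j:ℝ) * c j * ρ0 ^ (j-1)) := by
    apply Summable.of_norm_bounded hjb
    intro j
    rw [Real.norm_eq_abs, abs_mul, abs_mul, abs_pow, abs_of_nonneg hρ00,
      Nat.abs_cast]
    calc (j:ℝ) * |c j| * ρ0 ^ (j-1) = |c j| * ((j:ℝ) * ρ0 ^ (j-1)) := by ring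
      _ ≤ |b j| * ((j:ℝ) * ρ0 ^ (j-1)) := mul_le_mul_of_nonneg_right (hc_abs j) (hjpos j)
  set Dv := ∑' j : ℕ, (j:ℝ) * c j * ρ0 ^ (j-1) with hDv_def
  have hDv_eq : (∑' j : ℕ, if j = m then 0 else (j:ℝ) * b j * ρ0 ^ (j-1)) = Dv := by
    apply tsum_congr
    intro j
    by_cases hj : j = m
    · simp [hc_def, hj]
    · simp [hc_def, hj]
  have hDvneg : Dv < 0 := by
    by_contra hcon
    push_neg at hcon
    have hterm : ∀ j : ℕ, ((j:ℝ) * c j * ρ0^(j-1)) * (1 - ρ0) ≤ c j - c j * ρ0 ^ j := by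
      intro j
      rcases eq_or_ne j 1 with rfl | hj
      · apply le_of_eq
        norm_num
        ring
      · have h8 := pow_sub_pow_ge hρ00 hρ01 j
        have h9 := mul_le_mul_of_nonneg_left h8 (hc_nonneg j hj)
        rw [one_pow] at h9
        calc ((j:ℝ) * c j * ρ0^(j-1)) * (1 - ρ0)
            = c j * ((j:ℝ) * ρ0^(j-1) * (1 - ρ0)) := by ring
          _ ≤ c j * (1 - ρ0^j) := h9
          _ = c j - c j * ρ0^j := by ring
    have hsum1 : Summable (fun j : ℕ => ((j:ℝ) * c j * ρ0^(j-1)) * (1 - ρ0)) := hDsum.mul_right _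
    have hsum2 : Summable (fun j => c j - c j * ρ0 ^ j) := hcsum.sub (hcu ρ0 hρ00 hρ01)
    have h9 := Summable.tsum_le_tsum hterm hsum1 hsum2
    rw [tsum_mul_right, Summable.tsum_sub hcsum (hcu ρ0 hρ00 hρ01)] at h9
    have hBmρ0' : (∑' j, c j * ρ0 ^ j) = 0 := hBmρ0
    rw [hctot, hBmρ0'] at h9
    nlinarith
  refine ⟨ρ0, ?_, hρ0lt1, ?_, ?_⟩
  · have hseteq : {u ∈ Set.Icc (0:ℝ) 1 | (∑' j : ℕ, if j = m then 0 else b j * u ^ j) = 0}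
        = {u ∈ Set.Icc (0:ℝ) 1 | Bm u = 0} := by
      ext u
      rw [Set.mem_sep_iff, Set.mem_sep_iff, hBm_eq]
    rw [hseteq]
    exact ⟨⟨hρ0mem, hBmρ0⟩, hρ0lb⟩
  · rw [hDv_eq]
    exact hDvneg
  · intro r hr0 hr1 hrec
    rw [hDv_eq] at hr1 hrec
    have hDvne : Dv ≠ 0 := ne_of_lt hDvneg
    set D := -Dv with hD_def
    have hD : 0 < D := by rw [hD_def]; linarith
    have hrecD : ∀ k : ℕ, D * r (k+1) =
        (∑' i : ℕ, if i = 1 ∨ i = m then 0 else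
          b i * ∑ t ∈ (Finset.Nat.antidiagonalTuple i (k + 1)).filter
            (fun t => ∀ s, t s ≤ k), ∏ s, r (t s))
        + b m * ∑ t ∈ Finset.Nat.antidiagonalTuple m k, ∏ s, r (t s) := by
      intro k
      rcases Nat.eq_zero_or_pos k with rfl | hk
      · have hTS0 : (∑' i : ℕ, if i = 1 ∨ i = m then 0 else
            b i * ∑ t ∈ (Finset.Nat.antidiagonalTuple i (0 + 1)).filter
              (fun t => ∀ s, t s ≤ 0), ∏ s, r (t s)) = 0 := by
          have hempty : ∀ i : ℕ, ((Finset.Nat.antidiagonalTuple i (0+1)).filter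
              (fun t => ∀ s, t s ≤ 0)) = ∅ := by
            intro i
            rw [Finset.filter_eq_empty_iff]
            intro t ht hall
            rw [Finset.Nat.mem_antidiagonalTuple] at ht
            have : ∑ s, t s = 0 := Finset.sum_eq_zero (fun s _ => Nat.le_zero.mp (hall s))
            omega
          have : (fun i : ℕ => if i = 1 ∨ i = m then (0:ℝ) else
              b i * ∑ t ∈ (Finset.Nat.antidiagonalTuple i (0+1)).filter
                (fun t => ∀ s, t s ≤ 0), ∏ s, r (t s)) = fun _ => 0 := by
            funext i
            rw [hempty i, Finset.sum_empty, mul_zero, ite_self]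
          rw [this, tsum_zero]
        have hPP0 : (∑ t ∈ Finset.Nat.antidiagonalTuple m 0, ∏ s, r (t s)) = ρ0 ^ m := by
          rw [Finset.Nat.antidiagonalTuple_zero_right, Finset.sum_singleton]
          simp [hr0, Finset.prod_const, Finset.card_univ]
        rw [hTS0, hPP0, hr1, hD_def]
        field_simp
        ring
      · rw [hrec k hk, hD_def]
        field_simp
    have hrpos : ∀ k, 0 ≤ r k := by
      intro k
      induction k using Nat.strong_induction_on with
      | _ k ih =>
        cases k with
        | zero => rw [hr0]; exact hρ00
        | succ k =>
          refine (mul_nonneg_iff_of_pos_left hD).mp ?_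
          rw [hrecD k]
          refine add_nonneg (tsum_nonneg fun i => ?_)
            (mul_nonneg hbm.le (Finset.sum_nonneg fun t ht =>
              Finset.prod_nonneg fun s _ => ?_))
          · split
            · exact le_refl 0
            · next hcond =>
              push_neg at hcond
              exact mul_nonneg (hb_nonneg i hcond.1)
                (Finset.sum_nonneg fun t ht => Finset.prod_nonneg fun s _ => by
                  rw [Finset.mem_filter] at ht
                  exact ih (t s) (by have := ht.2 s; omega))
          · have h1 := Finset.Nat.mem_antidiagonalTuple.mp ht
            have h2 : t s ≤ ∑ s', t s' :=
              Finset.single_le_sum (fun s' _ => Nat.zero_le _) (Finset.mem_univ s)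
            exact ih (t s) (by omega)
    have hBmpos : ∀ u, 0 ≤ u → u < ρ0 → 0 < Bm u := by
      intro u hu hult
      by_contra hle
      push_neg at hle
      have hρ0pos : 0 < ρ0 := lt_of_le_of_lt hu hult
      have hB0pos : 0 < Bm 0 := by
        rcases eq_or_lt_of_le (hBm0 ▸ hb_nonneg 0 (by omega) : (0:ℝ) ≤ Bm 0) with h | h
        · exfalso
          have : ρ0 ≤ 0 := hρ0lb ⟨⟨le_rfl, zero_le_one⟩, h.symm⟩
          linarith
        · exact h
      have hsub : Set.Icc (0:ℝ) u ⊆ Set.Icc 0 1 :=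
        Set.Icc_subset_Icc le_rfl (by linarith)
      have hmem0 : (0:ℝ) ∈ Set.Icc (Bm u) (Bm 0) := ⟨hle, hB0pos.le⟩
      obtain ⟨y, hy, hBy⟩ := intermediate_value_Icc' hu (hBm_contOn.mono hsub) hmem0
      have h1 : ρ0 ≤ y := hρ0lb ⟨hsub hy, hBy⟩
      have h2 : y ≤ u := hy.2
      linarith
    have hv_main : ∀ v : ℝ, 0 ≤ v → v ≤ 1 → ∃ s : ℝ,
        IsLeast {u ∈ Set.Icc (0:ℝ) 1 | Bm u + b m * v * u ^ m = 0} s ∧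
        HasSum (fun k : ℕ => r k * v ^ k) s := by
      intro v hv0 hv1
      obtain ⟨s, hsL⟩ := hroot v hv0 hv1
      obtain ⟨⟨hsmem, hFs⟩, hslb⟩ := hsL
      refine ⟨s, ⟨⟨hsmem, hFs⟩, hslb⟩, ?_⟩
      have hs0 : 0 ≤ s := hsmem.1
      have hs1 : s ≤ 1 := hsmem.2
      have hFpos : ∀ u, 0 ≤ u → u < s → 0 < Bm u + b m * v * u ^ m := by
        intro u hu hus
        by_contra hle
        push_neg at hle
        have hFcont : ContinuousOn (fun u => Bm u + b m * v * u ^ m) (Set.Icc 0 1) :=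
          hBm_contOn.add (by fun_prop)
        have hspos : 0 < s := lt_of_le_of_lt hu hus
        have hF0 : (0:ℝ) ≤ Bm 0 + b m * v * 0 ^ m := by
          rw [hBm0, zero_pow hm0, mul_zero, add_zero]
          exact hb_nonneg 0 (by omega)
        have hF0pos : 0 < Bm 0 + b m * v * 0 ^ m := by
          rcases eq_or_lt_of_le hF0 with h | h
          · exfalso
            have : s ≤ 0 := hslb ⟨⟨le_rfl, zero_le_one⟩, h.symm⟩
            linarith
          · exact h
        have hsub : Set.Icc (0:ℝ) u ⊆ Set.Icc 0 1 :=
          Set.Icc_subset_Icc le_rfl (by linarith)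
        have hmem0 : (0:ℝ) ∈ Set.Icc (Bm u + b m * v * u ^ m) (Bm 0 + b m * v * 0 ^ m) :=
          ⟨hle, hF0pos.le⟩
        obtain ⟨y, hy, hFy⟩ := intermediate_value_Icc' hu (hFcont.mono hsub) hmem0
        have h1 : s ≤ y := hslb ⟨hsub hy, hFy⟩
        have h2 : y ≤ u := hy.2
        linarith
      have hρ0s : ρ0 ≤ s := by
        by_contra hcon
        push_neg at hcon
        have h1 : 0 < Bm s := hBmpos s hs0 hcon
        have h2 : 0 ≤ b m * v * s ^ m := by positivity
        linarith
      have hFnonneg : ∀ u, 0 ≤ u → u ≤ s → 0 ≤ Bm u + b m * v * u ^ m := by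
        intro u hu hus
        rcases lt_or_eq_of_le hus with h | h
        · exact (hFpos u hu h).le
        · rw [h, hFs]
      have hkey : ∀ u, ρ0 ≤ u → u ≤ s → Bm u + b m * v * u ^ m ≤ D * (s - u) := by
        intro u hρu hus
        have hu0 : 0 ≤ u := le_trans hρ00 hρu
        have hu1 : u ≤ 1 := le_trans hus hs1
        have hterm : ∀ j : ℕ, ((j:ℝ) * c j * ρ0^(j-1)) * (s - u) ≤ c j * s^j - c j * u^j := by
          intro j
          rcases eq_or_ne j 1 with rfl | hj
          · apply le_of_eq
            norm_num
            ring
          · have h8 := pow_sub_pow_ge hu0 hus j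
            have h8' : (j:ℝ) * ρ0^(j-1) * (s - u) ≤ s^j - u^j := by
              refine le_trans ?_ h8
              apply mul_le_mul_of_nonneg_right _ (by linarith)
              exact mul_le_mul_of_nonneg_left (pow_le_pow_left₀ hρ00 hρu _) (Nat.cast_nonneg _)
            have h9 := mul_le_mul_of_nonneg_left h8' (hc_nonneg j hj)
            calc ((j:ℝ) * c j * ρ0^(j-1)) * (s - u)
                = c j * ((j:ℝ) * ρ0^(j-1) * (s - u)) := by ring
              _ ≤ c j * (s^j - u^j) := h9
              _ = c j * s^j - c j * u^j := by ring
        have hsum2 : Summable (fun j => c j * s ^ j - c j * u ^ j) :=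
          (hcu s hs0 hs1).sub (hcu u hu0 hu1)
        have h10 := Summable.tsum_le_tsum hterm (hDsum.mul_right _) hsum2
        rw [tsum_mul_right, Summable.tsum_sub (hcu s hs0 hs1) (hcu u hu0 hu1)] at h10
        have hDs : Dv * (s - u) ≤ Bm s - Bm u := h10
        have hpow : u ^ m ≤ s ^ m := pow_le_pow_left₀ hu0 hus m
        have hbmv : 0 ≤ b m * v * (s ^ m - u ^ m) :=
          mul_nonneg (mul_nonneg hbm.le hv0) (sub_nonneg.mpr hpow)
        rw [hD_def]
        linarith [hDs, hFs, hbmv]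
      set L : ℕ → ℝ := fun N => ∑ k ∈ Finset.range (N+1), r k * v ^ k with hL_def
      have hrv_nonneg : ∀ k : ℕ, 0 ≤ r k * v ^ k :=
        fun k => mul_nonneg (hrpos k) (pow_nonneg hv0 k)
      have hL0 : L 0 = ρ0 := by
        simp [hL_def, hr0]
      have hLmono : ∀ N N', N ≤ N' → L N ≤ L N' := by
        intro N N' h
        apply Finset.sum_le_sum_of_subset_of_nonneg
          (Finset.range_subset_range.mpr (by omega))
        intro k _ _
        exact hrv_nonneg k
      have hρ0L : ∀ N, ρ0 ≤ L N := by
        intro N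
        rw [← hL0]
        exact hLmono 0 N (Nat.zero_le N)
      have hL_nonneg : ∀ N, 0 ≤ L N := fun N => le_trans hρ00 (hρ0L N)
      have hIco : ∀ E : ℕ, (∑ e ∈ Finset.Ico 1 (E+1), r e * v ^ e) = L E - ρ0 := by
        intro E
        have h := Finset.sum_eq_sum_Ico_succ_bot (Nat.succ_pos E) (fun k => r k * v ^ k)
        have h2 : L E = ∑ k ∈ Finset.Ico 0 (E+1), r k * v ^ k := by
          rw [hL_def]; beta_reduce; rw [Finset.range_eq_Ico]
        rw [h, hr0] at h2
        simp only [pow_zero, mul_one] at h2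
        linarith
      set AA : ℕ → ℕ → ℝ := fun N i => ∑ k ∈ Finset.range (N+1), v ^ (k+1) *
          ∑ t ∈ (Finset.Nat.antidiagonalTuple i (k+1)).filter (fun t => ∀ s, t s ≤ k),
            ∏ s, r (t s) with hAA_def
      set QQ : ℕ → ℝ := fun N => ∑ k ∈ Finset.range (N+1), v ^ k *
          ∑ t ∈ Finset.Nat.antidiagonalTuple m k, ∏ s, r (t s) with hQQ_def
      set XX : ℕ → ℕ → ℝ := fun N i =>
        (L N)^i - ρ0^i - (i:ℝ) * ρ0^(i-1) * (L N - ρ0) with hXX_def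
      set gg : ℕ → ℕ → ℝ := fun N i =>
        if i = 1 ∨ i = m then 0 else b i * AA N i with hgg_def
      set MM : ℕ → ℕ → ℝ := fun N i =>
        if i = 1 ∨ i = m then 0 else b i * XX N i with hMM_def
      have hAA_nonneg : ∀ N i, 0 ≤ AA N i := by
        intro N i
        simp only [hAA_def]
        apply Finset.sum_nonneg
        intro k _
        exact mul_nonneg (pow_nonneg hv0 _)
          (Finset.sum_nonneg fun t _ => Finset.prod_nonneg fun sx _ => hrpos _)
      have hF3 : ∀ N i, AA N i ≤ XX N i := by
        intro N i
        have h1 := sum_UU_add_le r v hrpos hv0 i N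
        have h2 := sum_UU r v i N
        rw [h2, hIco N, hr0] at h1
        simp only [hAA_def, hXX_def]
        linarith
      have hXX_nonneg : ∀ N i, 0 ≤ XX N i :=
        fun N i => le_trans (hAA_nonneg N i) (hF3 N i)
      have hXX_le_one : ∀ N i, L N ≤ 1 → XX N i ≤ 1 := by
        intro N i h1
        have hLpow : (L N)^i ≤ 1 := pow_le_one₀ (hL_nonneg N) h1
        have h3 : 0 ≤ (i:ℝ) * ρ0^(i-1) * (L N - ρ0) :=
          mul_nonneg (mul_nonneg (Nat.cast_nonneg _) (pow_nonneg hρ00 _))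
            (sub_nonneg.mpr (hρ0L N))
        have h4 : (0:ℝ) ≤ ρ0^i := pow_nonneg hρ00 i
        simp only [hXX_def]
        linarith
      have hMM_nonneg : ∀ N i, 0 ≤ MM N i := by
        intro N i
        simp only [hMM_def]
        split
        · exact le_refl 0
        · next hcond =>
          push_neg at hcond
          exact mul_nonneg (hb_nonneg i hcond.1) (hXX_nonneg N i)
      have hMM_summable : ∀ N, L N ≤ 1 → Summable (MM N) := by
        intro N h1
        apply Summable.of_nonneg_of_le (hMM_nonneg N) _ habs
        intro i
        simp only [hMM_def]
        split
        · exact abs_nonneg _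
        · next hcond =>
          push_neg at hcond
          calc b i * XX N i ≤ b i * 1 :=
                mul_le_mul_of_nonneg_left (hXX_le_one N i h1) (hb_nonneg i hcond.1)
            _ = b i := mul_one _
            _ ≤ |b i| := le_abs_self _
      have hgg_nonneg : ∀ N i, 0 ≤ gg N i := by
        intro N i
        simp only [hgg_def]
        split
        · exact le_refl 0
        · next hcond =>
          push_neg at hcond
          exact mul_nonneg (hb_nonneg i hcond.1) (hAA_nonneg N i)
      have hgg_le_MM : ∀ N i, gg N i ≤ MM N i := by
        intro N i
        simp only [hgg_def, hMM_def]
        split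
        · exact le_refl 0
        · next hcond =>
          push_neg at hcond
          exact mul_le_mul_of_nonneg_left (hF3 N i) (hb_nonneg i hcond.1)
      have hgg_summable : ∀ N, L N ≤ 1 → Summable (gg N) := fun N h1 =>
        Summable.of_nonneg_of_le (hgg_nonneg N) (fun i => hgg_le_MM N i)
          (hMM_summable N h1)
      have hperk_summable : ∀ N, L N ≤ 1 → ∀ k ∈ Finset.range (N+1),
          Summable (fun i : ℕ => if i = 1 ∨ i = m then 0 else
            b i * (v ^ (k+1) * ∑ t ∈ (Finset.Nat.antidiagonalTuple i (k+1)).filter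
              (fun t => ∀ s, t s ≤ k), ∏ s, r (t s))) := by
        intro N h1 k hk
        apply Summable.of_nonneg_of_le _ _ (hgg_summable N h1)
        · intro i
          split
          · exact le_refl 0
          · next hcond =>
            push_neg at hcond
            exact mul_nonneg (hb_nonneg i hcond.1)
              (mul_nonneg (pow_nonneg hv0 _)
                (Finset.sum_nonneg fun t _ => Finset.prod_nonneg fun sx _ => hrpos _))
        · intro i
          simp only [hgg_def]
          split
          · exact le_refl 0
          · next hcond =>
            push_neg at hcond
            apply mul_le_mul_of_nonneg_left _ (hb_nonneg i hcond.1)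
            simp only [hAA_def]
            exact Finset.single_le_sum
              (f := fun k' => v ^ (k'+1) *
                ∑ t ∈ (Finset.Nat.antidiagonalTuple i (k'+1)).filter
                  (fun t => ∀ s, t s ≤ k'), ∏ s, r (t s))
              (fun k' _ => mul_nonneg (pow_nonneg hv0 _)
                (Finset.sum_nonneg fun t _ => Finset.prod_nonneg fun sx _ => hrpos _)) hk
      have hF9 : ∀ N, L N ≤ 1 →
          D * (L (N+1) - ρ0) = (∑' i, gg N i) + b m * v * QQ N := by
        intro N h1
        have hLsucc : L (N+1) - ρ0 = ∑ k ∈ Finset.range (N+1), r (k+1) * v ^ (k+1) := by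
          have h := Finset.sum_range_succ' (fun k => r k * v ^ k) (N+1)
          have h2 : L (N+1) = (∑ k ∈ Finset.range (N+1), r (k+1) * v ^ (k+1)) + r 0 * v ^ 0 := by
            rw [hL_def]; exact h
          rw [hr0] at h2
          simp only [pow_zero, mul_one] at h2
          linarith
        rw [hLsucc, Finset.mul_sum]
        have hterm : ∀ k ∈ Finset.range (N+1), D * (r (k+1) * v ^ (k+1)) =
            (∑' i : ℕ, if i = 1 ∨ i = m then 0 else
              b i * (v ^ (k+1) * ∑ t ∈ (Finset.Nat.antidiagonalTuple i (k+1)).filter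
                (fun t => ∀ s, t s ≤ k), ∏ s, r (t s)))
            + b m * (v ^ (k+1) * ∑ t ∈ Finset.Nat.antidiagonalTuple m k, ∏ s, r (t s)) := by
          intro k _
          calc D * (r (k+1) * v ^ (k+1)) = (D * r (k+1)) * v ^ (k+1) := by ring
            _ = ((∑' i : ℕ, if i = 1 ∨ i = m then 0 else
                  b i * ∑ t ∈ (Finset.Nat.antidiagonalTuple i (k + 1)).filter
                    (fun t => ∀ s, t s ≤ k), ∏ s, r (t s))
                + b m * ∑ t ∈ Finset.Nat.antidiagonalTuple m k, ∏ s, r (t s)) * v ^ (k+1) := by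
                rw [hrecD k]
            _ = _ := by
                rw [add_mul, ← tsum_mul_right]
                congr 1
                · apply tsum_congr
                  intro i
                  split
                  · rw [zero_mul]
                  · ring
                · ring
        rw [Finset.sum_congr rfl hterm, Finset.sum_add_distrib]
        congr 1
        · rw [← Summable.tsum_finsetSum (hperk_summable N h1)]
          apply tsum_congr
          intro i
          by_cases hcond : i = 1 ∨ i = m
          · simp only [hgg_def, if_pos hcond, Finset.sum_const_zero]
          · simp only [hgg_def, if_neg hcond, hAA_def, Finset.mul_sum]
            try (apply Finset.sum_congr rfl; intro k _; ring)
        · simp only [hQQ_def, Finset.mul_sum]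
          apply Finset.sum_congr rfl
          intro k _
          rw [pow_succ]
          apply Finset.sum_congr rfl
          intro t _
          ring
      have hF10 : ∀ u : ℝ, 0 ≤ u → u ≤ 1 →
          (∑' i : ℕ, if i = 1 ∨ i = m then 0 else
            b i * (u^i - ρ0^i - (i:ℝ) * ρ0^(i-1) * (u - ρ0)))
          = (∑' j : ℕ, c j * u ^ j) + D * (u - ρ0) := by
        intro u hu0 hu1
        have hptw : ∀ i : ℕ, (if i = 1 ∨ i = m then (0:ℝ) else
            b i * (u^i - ρ0^i - (i:ℝ) * ρ0^(i-1) * (u - ρ0)))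
            = c i * u^i - c i * ρ0^i - ((i:ℝ) * c i * ρ0^(i-1)) * (u - ρ0) := by
          intro i
          by_cases him : i = m
          · rw [if_pos (Or.inr him)]
            simp [hc_def, him]
          · by_cases hi1 : i = 1
            · subst hi1
              rw [if_pos (Or.inl rfl)]
              simp only [hc_def, if_neg him]
              norm_num
              ring
            · rw [if_neg (by tauto)]
              simp only [hc_def, if_neg him]
              ring
        rw [tsum_congr hptw]
        have hA := hcu u hu0 hu1
        have hB := hcu ρ0 hρ00 hρ01
        have hC : Summable (fun i : ℕ => ((i:ℝ) * c i * ρ0^(i-1)) * (u - ρ0)) :=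
          hDsum.mul_right _
        rw [Summable.tsum_sub (hA.sub hB) hC, Summable.tsum_sub hA hB, tsum_mul_right]
        have hBmρ0' : (∑' j : ℕ, c j * ρ0 ^ j) = 0 := hBmρ0
        have hDv' : (∑' i : ℕ, (i:ℝ) * c i * ρ0^(i-1)) = Dv := hDv_def.symm
        rw [hBmρ0', hDv', hD_def]
        ring
      have hLle : ∀ N, L N ≤ s := by
        intro N
        induction N with
        | zero => rw [hL0]; exact hρ0s
        | succ N ihN =>
          have hLN1 : L N ≤ 1 := le_trans ihN hs1
          have h9 := hF9 N hLN1
          have hle1 : (∑' i, gg N i) ≤ ∑' i, MM N i :=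
            Summable.tsum_le_tsum (fun i => hgg_le_MM N i) (hgg_summable N hLN1)
              (hMM_summable N hLN1)
          have hMid : (∑' i, MM N i) = (∑' j : ℕ, c j * (L N) ^ j) + D * (L N - ρ0) :=
            hF10 (L N) (hL_nonneg N) hLN1
          have hBmLN : Bm (L N) = ∑' j : ℕ, c j * (L N) ^ j := rfl
          have hkey' := hkey (L N) (hρ0L N) ihN
          rw [hBmLN] at hkey'
          have hQle : QQ N ≤ (L N)^m := by
            have h2 := sum_WW_le r v hrpos hv0 m N
            rw [sum_WW r v m N] at h2
            exact h2
          have hbmvQ : b m * v * QQ N ≤ b m * v * (L N)^m :=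
            mul_le_mul_of_nonneg_left hQle (mul_nonneg hbm.le hv0)
          have hsplit : D * (s - L N) + D * (L N - ρ0) = D * (s - ρ0) := by ring
          have hchain : D * (L (N+1) - ρ0) ≤ D * (s - ρ0) := by
            rw [h9]
            linarith [hle1, hMid, hbmvQ, hkey', hsplit]
          have := le_of_mul_le_mul_left hchain hD
          linarith
      have hsummable : Summable (fun k : ℕ => r k * v ^ k) := by
        apply summable_of_sum_range_le hrv_nonneg
        intro n
        cases n with
        | zero => simpa using le_trans hρ00 hρ0s
        | succ n => exact hLle n
      have hLN_le_tot : ∀ N, L N ≤ ∑' k : ℕ, r k * v ^ k := fun N =>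
        Summable.sum_le_tsum _ (fun k _ => hrv_nonneg k) hsummable
      have htot_le : (∑' k : ℕ, r k * v ^ k) ≤ s := by
        apply Summable.tsum_le_of_sum_range_le hsummable
        intro n
        cases n with
        | zero => simpa using le_trans hρ00 hρ0s
        | succ n => exact hLle n
      set Ltot := ∑' k : ℕ, r k * v ^ k with hLtot_def
      have hρ0Ltot : ρ0 ≤ Ltot := le_trans (hρ0L 0) (hLN_le_tot 0)
      have hLtot0 : 0 ≤ Ltot := le_trans hρ00 hρ0Ltot
      have hLtot1 : Ltot ≤ 1 := le_trans htot_le hs1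
      have hlow : ∀ N' : ℕ,
          (∑' j : ℕ, c j * (L N') ^ j) + D * (L N' - ρ0) + b m * v * (L N')^m
          ≤ D * (Ltot - ρ0) := by
        intro N'
        have hLN'1 : L N' ≤ 1 := le_trans (hLle N') hs1
        have hMs := hMM_summable N' hLN'1
        have hMid := hF10 (L N') (hL_nonneg N') hLN'1
        have hIneq : ∀ I0 : ℕ, (∑ i ∈ Finset.range I0, MM N' i) + b m * v * (L N')^m
            ≤ D * (Ltot - ρ0) := by
          intro I0
          set N := (I0 + m) * (N' + 1) with hN_def
          have hL_N1 : L N ≤ 1 := le_trans (hLle N) hs1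
          have h9 := hF9 N hL_N1
          have hNm : m * N' ≤ N := by
            have h := Nat.mul_le_mul (show m ≤ I0 + m by omega) (show N' ≤ N' + 1 by omega)
            omega
          have hQge : (L N')^m ≤ QQ N := by
            have h2 := le_sum_WW r v hrpos hv0 m N N' hNm
            rw [sum_WW r v m N] at h2
            exact h2
          have hMg : ∀ i ∈ Finset.range I0, MM N' i ≤ gg N i := by
            intro i hi
            rw [Finset.mem_range] at hi
            have hiN : i * N' ≤ N + 1 := by
              have h := Nat.mul_le_mul (show i ≤ I0 + m by omega) (show N' ≤ N' + 1 by omega)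
              omega
            simp only [hMM_def, hgg_def]
            split
            · exact le_refl 0
            · next hcond =>
              push_neg at hcond
              apply mul_le_mul_of_nonneg_left _ (hb_nonneg i hcond.1)
              have h1 := le_sum_UU r v hrpos hv0 i N N' hiN
              have h2 := sum_UU r v i N
              rw [h2, hIco N', hr0] at h1
              simp only [hXX_def, hAA_def]
              linarith
          have hfin : (∑ i ∈ Finset.range I0, gg N i) ≤ ∑' i, gg N i :=
            Summable.sum_le_tsum _ (fun i _ => hgg_nonneg N i) (hgg_summable N hL_N1)
          calc (∑ i ∈ Finset.range I0, MM N' i) + b m * v * (L N')^m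
              ≤ (∑ i ∈ Finset.range I0, gg N i) + b m * v * QQ N :=
                add_le_add (Finset.sum_le_sum hMg)
                  (mul_le_mul_of_nonneg_left hQge (mul_nonneg hbm.le hv0))
            _ ≤ (∑' i, gg N i) + b m * v * QQ N := by linarith [hfin]
            _ = D * (L (N+1) - ρ0) := h9.symm
            _ ≤ D * (Ltot - ρ0) := by
                apply mul_le_mul_of_nonneg_left _ hD.le
                have := hLN_le_tot (N+1)
                linarith
        have ht := hMs.hasSum.tendsto_sum_nat
        have ht2 : Filter.Tendsto
            (fun I0 : ℕ => (∑ i ∈ Finset.range I0, MM N' i) + b m * v * (L N')^m)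
            Filter.atTop (𝓝 ((∑' i, MM N' i) + b m * v * (L N')^m)) := ht.add_const _
        have hlim := le_of_tendsto' ht2 hIneq
        rw [hMid] at hlim
        linarith
      have hLtend : Filter.Tendsto L Filter.atTop (𝓝 Ltot) := by
        have h := hsummable.hasSum.tendsto_sum_nat
        have hcomp : Filter.Tendsto (fun N' : ℕ => N' + 1) Filter.atTop Filter.atTop :=
          Filter.tendsto_add_atTop_nat 1
        exact h.comp hcomp
      have hBmtend : Filter.Tendsto (fun N' => Bm (L N')) Filter.atTop (𝓝 (Bm Ltot)) := by
        have hcw : ContinuousWithinAt Bm (Set.Icc 0 1) Ltot := hBm_contOn Ltot ⟨hLtot0, hLtot1⟩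
        apply hcw.tendsto.comp
        apply tendsto_nhdsWithin_of_tendsto_nhds_of_eventually_within _ hLtend
        exact Filter.Eventually.of_forall (fun N' => ⟨hL_nonneg N', le_trans (hLle N') hs1⟩)
      have hall : Filter.Tendsto
          (fun N' => Bm (L N') + D * (L N' - ρ0) + b m * v * (L N')^m) Filter.atTop
          (𝓝 (Bm Ltot + D * (Ltot - ρ0) + b m * v * Ltot^m)) :=
        (hBmtend.add ((hLtend.sub_const ρ0).const_mul D)).add
          ((hLtend.pow m).const_mul (b m * v))
      have hFL_le : Bm Ltot + D * (Ltot - ρ0) + b m * v * Ltot^m ≤ D * (Ltot - ρ0) := by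
        apply le_of_tendsto' hall
        intro N'
        have hBmLN : Bm (L N') = ∑' j : ℕ, c j * (L N') ^ j := rfl
        rw [hBmLN]
        exact hlow N'
      have hFLnonneg : 0 ≤ Bm Ltot + b m * v * Ltot^m := hFnonneg Ltot hLtot0 htot_le
      have hFL : Bm Ltot + b m * v * Ltot^m = 0 := le_antisymm (by linarith) hFLnonneg
      have hsLt : s ≤ Ltot := hslb ⟨⟨hLtot0, hLtot1⟩, hFL⟩
      have hLs : Ltot = s := le_antisymm htot_le hsLt
      rw [← hLs]
      exact hsummable.hasSum
    refine ⟨hrpos, ?_, ?_⟩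
    · intro v hv
      obtain ⟨s, hls, hhs⟩ := hv_main v hv.1 hv.2
      refine ⟨s, ?_, hhs⟩
      have hseteq2 : {u ∈ Set.Icc (0:ℝ) 1 |
          (∑' j : ℕ, if j = m then 0 else b j * u ^ j) + b m * v * u ^ m = 0}
          = {u ∈ Set.Icc (0:ℝ) 1 | Bm u + b m * v * u ^ m = 0} := by
        ext u
        rw [Set.mem_sep_iff, Set.mem_sep_iff, hBm_eq]
      rw [hseteq2]
      exact hls
    · obtain ⟨s, hls, hhs⟩ := hv_main 1 zero_le_one le_rfl
      have hseq : {u ∈ Set.Icc (0:ℝ) 1 | Bm u + b m * 1 * u ^ m = 0}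
          = {u ∈ Set.Icc (0:ℝ) 1 | (∑' j : ℕ, b j * u ^ j) = 0} := by
        ext u
        rw [Set.mem_sep_iff, Set.mem_sep_iff]
        apply and_congr_right
        intro hu
        have hbsplit : (∑' j : ℕ, b j * u ^ j)
            = b m * u ^ m + ∑' j : ℕ, if j = m then 0 else b j * u ^ j := by
          have := Summable.tsum_eq_add_tsum_ite (hbu u hu.1 hu.2) m
          convert this using 2
        rw [hbsplit, hBm_eq, mul_one]
        constructor
        · intro h
          linarith
        · intro h
          linarith
      rw [hseq] at hls
      have hsρ : s = ρ := hls.unique hρ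
      rw [hsρ] at hhs
      have hfun : (fun k : ℕ => r k * (1:ℝ) ^ k) = r := by
        funext k
        rw [one_pow, mul_one]
      rwa [hfun] at hhs
end

section
/- For every y ∈ [0,1] and z ∈ (0,1], the series Σ_{n=2}^∞ ((2n−3)!! · 2^{n−1} · μ^n λ^{n−1} / (n! (μ+λ)^{2n−1})) z^{n−1} y^n converges absolutely and ((μ+λ) − √((μ+λ)² − 4μλzy)) / (2λz) = μy/(μ+λ) + Σ_{n=2}^∞ ((2n−3)!! · 2^{n−1} · μ^n λ^{n−1} / (n! (μ+λ)^{2n−1})) z^{n−1} y^n, where (2n−3)!! denotes the double factorial of 2n−3. -/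
open Finset

private noncomputable def aa (k : ℕ) : ℝ := (catalan k : ℝ) / 2 ^ (2 * k + 1)

private noncomputable def bb (k : ℕ) : ℝ := (Nat.centralBinom k : ℝ) / 4 ^ k

private lemma aa_nonneg (k : ℕ) : 0 ≤ aa k := by unfold aa; positivity

private lemma bb_nonneg (k : ℕ) : 0 ≤ bb k := by unfold bb; positivity

private lemma catalan_rec (n : ℕ) :
    ((n : ℝ) + 2) * catalan (n + 1) = 2 * (2 * n + 1) * catalan n := by
  have h1 : ((n : ℝ) + 1 + 1) * catalan (n + 1) = Nat.centralBinom (n + 1) := by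
    exact_mod_cast congrArg (Nat.cast : ℕ → ℝ) (succ_mul_catalan_eq_centralBinom (n + 1))
  have h2 : ((n : ℝ) + 1) * catalan n = Nat.centralBinom n := by
    exact_mod_cast congrArg (Nat.cast : ℕ → ℝ) (succ_mul_catalan_eq_centralBinom n)
  have h3 : ((n : ℝ) + 1) * Nat.centralBinom (n + 1) = 2 * (2 * n + 1) * Nat.centralBinom n := by
    exact_mod_cast congrArg (Nat.cast : ℕ → ℝ) (Nat.succ_mul_centralBinom_succ n)
  have hn : ((n : ℝ) + 1) ≠ 0 := by positivity
  apply mul_left_cancel₀ hn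
  rw [← h2] at h3
  nlinarith [h1, h3]

private lemma bb_succ (n : ℕ) : ((n : ℝ) + 1) * bb (n + 1) = ((2 * n + 1) / 2) * bb n := by
  have h3 : ((n : ℝ) + 1) * Nat.centralBinom (n + 1) = 2 * (2 * n + 1) * Nat.centralBinom n := by
    exact_mod_cast congrArg (Nat.cast : ℕ → ℝ) (Nat.succ_mul_centralBinom_succ n)
  simp only [bb]
  rw [pow_succ]
  have h4 : (0:ℝ) < 4 ^ n := by positivity
  field_simp
  nlinarith [h3, h4]

private lemma aa_eq_sub (k : ℕ) : aa k = bb k - bb (k + 1) := by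
  have h2 : ((k : ℝ) + 1) * catalan k = Nat.centralBinom k := by
    exact_mod_cast congrArg (Nat.cast : ℕ → ℝ) (succ_mul_catalan_eq_centralBinom k)
  have hb := bb_succ k
  have hk : ((k : ℝ) + 1) ≠ 0 := by positivity
  have hb1 : bb (k + 1) = ((2 * k + 1) / (2 * (k + 1))) * bb k := by
    field_simp at hb ⊢
    linarith [hb]
  rw [hb1]
  simp only [aa, bb]
  rw [← h2]
  have h4 : (4 : ℝ) ^ k = 2 ^ (2 * k) := by
    rw [two_mul, pow_add, show (4:ℝ) = 2 * 2 by norm_num, mul_pow]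
  rw [h4]
  field_simp
  ring

private lemma sum_aa (N : ℕ) : ∑ k ∈ range N, aa k = 1 - bb N := by
  have : ∀ k, aa k = bb k - bb (k + 1) := aa_eq_sub
  simp only [this]
  rw [Finset.sum_range_sub' bb N]
  simp [bb, Nat.centralBinom_zero]

private lemma sum_aa_le (N : ℕ) : ∑ k ∈ range N, aa k ≤ 1 := by
  rw [sum_aa]; linarith [bb_nonneg N]

set_option maxHeartbeats 1000000 in
private lemma key (x : ℝ) (hx0 : 0 ≤ x) (hx1 : x ≤ 1) :
    Summable (fun k => aa k * x ^ (k + 1)) ∧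
    1 - Real.sqrt (1 - x) = ∑' k, aa k * x ^ (k + 1) := by
  -- basic bounds
  have hxp : ∀ k : ℕ, 0 ≤ x ^ k := fun k => pow_nonneg hx0 k
  have hxle : ∀ k : ℕ, x ^ k ≤ 1 := by
    intro k
    exact pow_le_one₀ hx0 hx1
  set f : ℕ → ℝ := fun k => aa k * x ^ k with hf
  have hfnn : ∀ k, 0 ≤ f k := fun k => mul_nonneg (aa_nonneg k) (hxp k)
  have hfle : ∀ k, f k ≤ aa k := fun k =>
    mul_le_of_le_one_right (aa_nonneg k) (hxle k)
  have hfsum : Summable f := by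
    apply summable_of_sum_range_le hfnn
    intro n
    calc ∑ i ∈ range n, f i ≤ ∑ i ∈ range n, aa i := Finset.sum_le_sum fun i _ => hfle i
    _ ≤ 1 := sum_aa_le n
  have hgsum : Summable (fun k => aa k * x ^ (k + 1)) := by
    have := hfsum.mul_left x
    apply this.congr
    intro k
    simp only [hf]
    ring
  refine ⟨hgsum, ?_⟩
  set G : ℝ := ∑' k, aa k * x ^ (k + 1) with hG
  -- G ≤ 1
  have hGle : G ≤ 1 := by
    apply Summable.tsum_le_of_sum_range_le hgsum
    intro n
    calc ∑ i ∈ range n, aa i * x ^ (i + 1)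
        ≤ ∑ i ∈ range n, aa i := Finset.sum_le_sum fun i _ =>
          mul_le_of_le_one_right (aa_nonneg i) (hxle (i + 1))
    _ ≤ 1 := sum_aa_le n
  -- Cauchy product
  have hnorm : Summable (fun k => ‖f k‖) := by
    apply hfsum.congr; intro k; rw [Real.norm_of_nonneg (hfnn k)]
  have hcauchy : (∑' n, f n) * (∑' n, f n)
      = ∑' n, ∑ kl ∈ Finset.HasAntidiagonal.antidiagonal n, f kl.1 * f kl.2 :=
    tsum_mul_tsum_eq_tsum_sum_antidiagonal_of_summable_norm hnorm hnorm
  have hinner : ∀ n : ℕ, ∑ kl ∈ Finset.HasAntidiagonal.antidiagonal n, f kl.1 * f kl.2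
      = 2 * (aa (n + 1) * x ^ n) := by
    intro n
    have : ∀ kl ∈ Finset.HasAntidiagonal.antidiagonal n, f kl.1 * f kl.2
        = ((catalan kl.1 : ℝ) * catalan kl.2) * x ^ n / 2 ^ (2 * n + 2) := by
      rintro ⟨a, b⟩ hab
      rw [Finset.HasAntidiagonal.mem_antidiagonal] at hab
      simp only [hf, aa]
      rw [← hab]
      rw [show x ^ (a + b) = x ^ a * x ^ b by rw [pow_add]]
      rw [show (2:ℝ) ^ (2 * (a + b) + 2) = 2 ^ (2 * a + 1) * 2 ^ (2 * b + 1) by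
        rw [← pow_add]; ring_nf]
      field_simp
    rw [Finset.sum_congr rfl this, ← Finset.sum_div, ← Finset.sum_mul]
    have hcat : ∑ kl ∈ Finset.HasAntidiagonal.antidiagonal n, (catalan kl.1 : ℝ) * catalan kl.2
        = (catalan (n + 1) : ℝ) := by
      rw [catalan_succ']
      push_cast
      rfl
    rw [hcat]
    simp only [aa]
    rw [show 2 * (n + 1) + 1 = 2 * n + 3 by ring,
      show 2 * n + 2 = (2 * n) + 2 by ring]
    field_simp
    ring
  -- G = x * ∑' f, and quadratic equation
  have hGxf : G = x * ∑' n, f n := by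
    rw [hG, ← tsum_mul_left]
    congr 1; funext k; simp only [hf]; ring
  have hsum2 : Summable (fun n => aa (n + 1) * x ^ (n + 2)) :=
    (summable_nat_add_iff 1).mpr hgsum
  have haa0 : aa 0 = 1 / 2 := by simp [aa]
  have hsplit : G = aa 0 * x ^ 1 + ∑' n, aa (n + 1) * x ^ (n + 2) :=
    Summable.tsum_eq_zero_add hgsum
  have hGsq : G ^ 2 = 2 * G - x := by
    have h1 : G ^ 2 = x ^ 2 * ((∑' n, f n) * (∑' n, f n)) := by rw [hGxf]; ring
    rw [hcauchy, tsum_congr hinner] at h1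
    have h2 : x ^ 2 * (∑' n, 2 * (aa (n + 1) * x ^ n))
        = ∑' n, 2 * (aa (n + 1) * x ^ (n + 2)) := by
      rw [← tsum_mul_left]
      congr 1; funext n; ring
    rw [h2] at h1
    rw [tsum_mul_left] at h1
    rw [h1, hsplit, haa0]
    ring
  have hGle1 : 0 ≤ 1 - G := by linarith
  have h1x : 1 - x = (1 - G) ^ 2 := by nlinarith [hGsq]
  rw [h1x, Real.sqrt_sq hGle1]
  ring

private lemma aa_succ_eq : ∀ n : ℕ, aa (n + 1)
    = (Nat.doubleFactorial (2 * n + 1) : ℝ) / (2 ^ (n + 2) * Nat.factorial (n + 2))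
  | 0 => by
      simp [aa, catalan_one, Nat.factorial]
      norm_num
  | n + 1 => by
      have ih := aa_succ_eq n
      have hrec := catalan_rec (n + 1)
      push_cast at hrec
      have hdf : (Nat.doubleFactorial (2 * (n + 1) + 1) : ℝ)
          = (2 * n + 3) * Nat.doubleFactorial (2 * n + 1) := by
        rw [show 2 * (n + 1) + 1 = 2 * n + 1 + 2 from by ring, Nat.doubleFactorial_add_two]
        push_cast; ring
      have hfact : (Nat.factorial (n + 1 + 2) : ℝ) = (n + 3) * Nat.factorial (n + 2) := by
        rw [show n + 1 + 2 = (n + 2) + 1 from rfl, Nat.factorial_succ]; push_cast; ring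
      simp only [aa] at ih ⊢
      rw [hdf, hfact]
      have hF : (0:ℝ) < Nat.factorial (n + 2) := by positivity
      have hn3 : (0:ℝ) < (n:ℝ) + 3 := by positivity
      field_simp at ih ⊢
      linear_combination (2 ^ (n + 3) * (Nat.factorial (n + 2) : ℝ)) * hrec
        + (4 * (2 * (n:ℝ) + 3)) * ih

set_option maxHeartbeats 2000000 in
theorem stmt_14 (μ lam : ℝ) (hμ : 0 < μ) (hlam : 0 < lam)
    (y z : ℝ) (hy : y ∈ Set.Icc (0:ℝ) 1) (hz : z ∈ Set.Ioc (0:ℝ) 1) :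
    Summable (fun n : ℕ =>
      |((Nat.doubleFactorial (2 * (n + 2) - 3) : ℝ) * 2 ^ (n + 2 - 1) * μ ^ (n + 2) *
          lam ^ (n + 2 - 1) / ((Nat.factorial (n + 2) : ℝ) * (μ + lam) ^ (2 * (n + 2) - 1))) *
        z ^ (n + 2 - 1) * y ^ (n + 2)|) ∧
    ((μ + lam) - Real.sqrt ((μ + lam) ^ 2 - 4 * μ * lam * z * y)) / (2 * lam * z) =
      μ * y / (μ + lam) +
      ∑' n : ℕ,
        ((Nat.doubleFactorial (2 * (n + 2) - 3) : ℝ) * 2 ^ (n + 2 - 1) * μ ^ (n + 2) *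
            lam ^ (n + 2 - 1) / ((Nat.factorial (n + 2) : ℝ) * (μ + lam) ^ (2 * (n + 2) - 1))) *
          z ^ (n + 2 - 1) * y ^ (n + 2) := by
  obtain ⟨hy0, hy1⟩ := hy
  obtain ⟨hz0, hz1⟩ := hz
  have hml : (0:ℝ) < μ + lam := by linarith
  set C : ℝ := (μ + lam) / (2 * lam * z) with hCdef
  set x : ℝ := 4 * μ * lam * z * y / (μ + lam) ^ 2 with hxdef
  have hx0 : 0 ≤ x := by
    apply div_nonneg _ (by positivity)
    have : 0 ≤ 4 * μ * lam * z := by positivity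
    exact mul_nonneg this hy0
  have hx1 : x ≤ 1 := by
    rw [hxdef, div_le_one (by positivity)]
    have hzy : z * y ≤ 1 := mul_le_one₀ hz1 hy0 hy1
    nlinarith [sq_nonneg (μ - lam), mul_pos hμ hlam, mul_nonneg hz0.le hy0]
  obtain ⟨hsum, heq⟩ := key x hx0 hx1
  have hterm : ∀ n : ℕ,
      ((Nat.doubleFactorial (2 * (n + 2) - 3) : ℝ) * 2 ^ (n + 2 - 1) * μ ^ (n + 2) *
          lam ^ (n + 2 - 1) / ((Nat.factorial (n + 2) : ℝ) * (μ + lam) ^ (2 * (n + 2) - 1))) *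
        z ^ (n + 2 - 1) * y ^ (n + 2)
      = C * (aa (n + 1) * x ^ (n + 2)) := by
    intro n
    have e1 : 2 * (n + 2) - 3 = 2 * n + 1 := by omega
    have e2 : 2 * (n + 2) - 1 = 2 * n + 3 := by omega
    have e3 : n + 2 - 1 = n + 1 := by omega
    have h4 : (4:ℝ) ^ (n + 2) = 2 ^ (2 * (n + 2)) := by
      rw [pow_mul]; norm_num
    have hxpow : x ^ (n + 2)
        = 2 ^ (2 * (n + 2)) * (μ ^ (n + 2) * lam ^ (n + 2) * z ^ (n + 2) * y ^ (n + 2))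
          / (μ + lam) ^ (2 * (n + 2)) := by
      rw [hxdef, div_pow, ← pow_mul, ← h4]
      ring
    rw [e1, e2, e3, aa_succ_eq n, hxpow, hCdef]
    have hF : (0:ℝ) < Nat.factorial (n + 2) := by positivity
    field_simp
    ring
  have hsum1 : Summable (fun n => aa (n + 1) * x ^ (n + 2)) :=
    (summable_nat_add_iff 1).mpr hsum
  have htnn : ∀ n : ℕ, 0 ≤ C * (aa (n + 1) * x ^ (n + 2)) := by
    intro n
    have hC0 : 0 ≤ C := by positivity
    exact mul_nonneg hC0 (mul_nonneg (aa_nonneg _) (pow_nonneg hx0 _))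
  constructor
  · apply (hsum1.mul_left C).congr
    intro n
    rw [← hterm n, abs_of_nonneg]
    rw [hterm n]
    exact htnn n
  · have hsqrt : Real.sqrt ((μ + lam) ^ 2 - 4 * μ * lam * z * y)
        = (μ + lam) * Real.sqrt (1 - x) := by
      have hrw : (μ + lam) ^ 2 - 4 * μ * lam * z * y = (μ + lam) ^ 2 * (1 - x) := by
        rw [hxdef]; field_simp
      rw [hrw, Real.sqrt_mul (sq_nonneg _), Real.sqrt_sq hml.le]
    have hsplit : (∑' k, aa k * x ^ (k + 1))
        = aa 0 * x ^ 1 + ∑' n, aa (n + 1) * x ^ (n + 2) := Summable.tsum_eq_zero_add hsum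
    have haa0 : aa 0 = 1 / 2 := by simp [aa]
    calc ((μ + lam) - Real.sqrt ((μ + lam) ^ 2 - 4 * μ * lam * z * y)) / (2 * lam * z)
        = C * (1 - Real.sqrt (1 - x)) := by rw [hsqrt, hCdef]; ring
      _ = C * (aa 0 * x ^ 1 + ∑' n, aa (n + 1) * x ^ (n + 2)) := by rw [heq, hsplit]
      _ = C * (aa 0 * x ^ 1) + ∑' n, C * (aa (n + 1) * x ^ (n + 2)) := by
          rw [mul_add, tsum_mul_left]
      _ = _ := by
          rw [haa0, hCdef, hxdef]
          congr 1
          · field_simp; ring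
          · exact tsum_congr fun n => by rw [← hterm n]
end

section
/- The series Σ_{n=2}^∞ (2n−3)!! · 2^{n−1} · μ^n λ^{n−1} / (n! (μ+λ)^{2n−1}) converges and μ/(μ+λ) + Σ_{n=2}^∞ (2n−3)!! · 2^{n−1} · μ^n λ^{n−1} / (n! (μ+λ)^{2n−1}) = min(μ/λ, 1); in particular, when μ ≥ λ the left-hand side equals 1. -/
open Nat Finset

lemma a_diff (k : ℕ) : (Nat.centralBinom k : ℝ)/4^k - (Nat.centralBinom (k+1) : ℝ)/4^(k+1)
    = 2 * (catalan k : ℝ) / 4^(k+1) := by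
  have h1 : ((k:ℝ)+1) * (Nat.centralBinom (k+1) : ℝ) = 2*(2*k+1)*(Nat.centralBinom k : ℝ) := by
    exact_mod_cast congrArg (Nat.cast : ℕ → ℝ) (Nat.succ_mul_centralBinom_succ k)
  have h2 : ((k:ℝ)+1) * (catalan k : ℝ) = (Nat.centralBinom k : ℝ) := by
    exact_mod_cast congrArg (Nat.cast : ℕ → ℝ) (succ_mul_catalan_eq_centralBinom k)
  have h4 : (4:ℝ)^k ≠ 0 := by positivity
  have hk : ((k:ℝ)+1) ≠ 0 := by positivity
  have key : 4 * (Nat.centralBinom k : ℝ) - (Nat.centralBinom (k+1) : ℝ) = 2 * (catalan k : ℝ) := by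
    apply mul_left_cancel₀ hk
    linear_combination -h1 - 2*h2
  have h41 : (4:ℝ)^(k+1) ≠ 0 := by positivity
  field_simp
  ring_nf
  rw [Nat.add_comm 1 k]
  linear_combination (4:ℝ)^k * key

lemma partial_bound {x : ℝ} (hx0 : 0 ≤ x) (hx : x ≤ 1/4) (N : ℕ) :
    ∑ k ∈ range N, (catalan k : ℝ) * x^(k+1) ≤ 1/2 := by
  have hle : ∀ k, (catalan k : ℝ) * x^(k+1) ≤
      ((Nat.centralBinom k : ℝ)/4^k - (Nat.centralBinom (k+1) : ℝ)/4^(k+1)) / 2 := by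
    intro k
    rw [a_diff]
    have : x^(k+1) ≤ (1/4)^(k+1) := pow_le_pow_left₀ hx0 (by linarith) _
    have hc : (0:ℝ) ≤ (catalan k : ℝ) := by positivity
    calc (catalan k : ℝ) * x^(k+1) ≤ (catalan k : ℝ) * (1/4)^(k+1) := by
          exact mul_le_mul_of_nonneg_left this hc
      _ = 2 * (catalan k : ℝ) / 4^(k+1) / 2 := by
          rw [div_pow, one_pow]; ring
  calc ∑ k ∈ range N, (catalan k : ℝ) * x^(k+1)
      ≤ ∑ k ∈ range N, ((Nat.centralBinom k : ℝ)/4^k - (Nat.centralBinom (k+1) : ℝ)/4^(k+1)) / 2 :=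
        Finset.sum_le_sum fun k _ => hle k
    _ = ((Nat.centralBinom 0 : ℝ)/4^0 - (Nat.centralBinom N : ℝ)/4^N) / 2 := by
        rw [← Finset.sum_div, Finset.sum_range_sub' (fun k => (Nat.centralBinom k : ℝ)/4^k)]
    _ ≤ 1/2 := by
        have : (0:ℝ) ≤ (Nat.centralBinom N : ℝ)/4^N := by positivity
        simp [Nat.centralBinom_zero]; linarith




lemma cat_summable {x : ℝ} (hx0 : 0 ≤ x) (hx : x ≤ 1/4) :
    Summable (fun k : ℕ => (catalan k : ℝ) * x^(k+1)) :=
  summable_of_sum_range_le (fun k => by positivity) (partial_bound hx0 hx)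

lemma cat_fe {x : ℝ} (hx0 : 0 ≤ x) (hx : x ≤ 1/4) :
    (∑' k : ℕ, (catalan k : ℝ) * x^(k+1)) =
      x + (∑' k : ℕ, (catalan k : ℝ) * x^(k+1))^2 := by
  have hs := cat_summable hx0 hx
  have hnorm : Summable (fun k : ℕ => ‖(catalan k : ℝ) * x^(k+1)‖) := by
    simp only [Real.norm_eq_abs]
    exact hs.abs
  have hmul := tsum_mul_tsum_eq_tsum_sum_antidiagonal_of_summable_norm hnorm hnorm
  have hinner : ∀ n : ℕ, (∑ kl ∈ antidiagonal n,
      ((catalan kl.1 : ℝ) * x^(kl.1+1)) * ((catalan kl.2 : ℝ) * x^(kl.2+1)))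
      = (catalan (n+1) : ℝ) * x^(n+2) := by
    intro n
    have step : ∀ kl ∈ antidiagonal n,
        ((catalan kl.1 : ℝ) * x^(kl.1+1)) * ((catalan kl.2 : ℝ) * x^(kl.2+1))
        = ((catalan kl.1 * catalan kl.2 : ℕ) : ℝ) * x^(n+2) := by
      intro kl hkl
      have h := Finset.HasAntidiagonal.mem_antidiagonal.mp hkl
      push_cast
      rw [← h]
      ring
    rw [Finset.sum_congr rfl step, ← Finset.sum_mul, ← Nat.cast_sum, ← catalan_succ']
  simp only [hinner] at hmul
  have h2 : (∑' k : ℕ, (catalan k : ℝ) * x^(k+1))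
      = x + (∑' n : ℕ, (catalan (n+1) : ℝ) * x^(n+1+1)) := by
    rw [Summable.tsum_eq_zero_add hs]
    simp
  rw [sq, hmul]
  exact h2



lemma cat_closed {x : ℝ} (hx0 : 0 ≤ x) (hx : x ≤ 1/4) :
    (∑' k : ℕ, (catalan k : ℝ) * x^(k+1)) = (1 - Real.sqrt (1 - 4*x))/2 := by
  have hfe := cat_fe hx0 hx
  have hle : (∑' k : ℕ, (catalan k : ℝ) * x^(k+1)) ≤ 1/2 :=
    Real.tsum_le_of_sum_range_le (fun k => by positivity) (partial_bound hx0 hx)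
  set f := ∑' k : ℕ, (catalan k : ℝ) * x^(k+1) with hf
  have hsq : (1 - 2*f)^2 = 1 - 4*x := by linear_combination -4*hfe
  have h1 : Real.sqrt (1-4*x) = 1 - 2*f := by
    rw [← hsq, Real.sqrt_sq (by linarith)]
  rw [h1]; ring

lemma dfact_nat (n : ℕ) : (2*n+1)‼ * 2^(n+1) = catalan (n+1) * (n+2)! := by
  have e1 : (2*n+1+1)! = (2*n+1+1)‼ * (2*n+1)‼ := Nat.factorial_eq_mul_doubleFactorial (2*n+1)
  have e2 : (2*n+1+1)‼ = 2^(n+1) * (n+1)! := by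
    rw [show 2*n+1+1 = 2*(n+1) by ring]
    exact Nat.doubleFactorial_two_mul (n+1)
  have e3 : (2*(n+1)).choose (n+1) * (n+1)! * (n+1)! = (2*(n+1))! := by
    have := Nat.choose_mul_factorial_mul_factorial (show n+1 ≤ 2*(n+1) by omega)
    rwa [show 2*(n+1) - (n+1) = n+1 by omega] at this
  have e4 : (n+2) * catalan (n+1) = (2*(n+1)).choose (n+1) := by
    have := succ_mul_catalan_eq_centralBinom (n+1)
    rwa [Nat.centralBinom_eq_two_mul_choose] at this
  apply Nat.eq_of_mul_eq_mul_right (Nat.factorial_pos (n+1))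
  calc (2*n+1)‼ * 2^(n+1) * (n+1)!
      = (2*n+1+1)‼ * (2*n+1)‼ := by rw [e2]; ring
    _ = (2*(n+1))! := by rw [← e1, show 2*n+1+1 = 2*(n+1) by ring]
    _ = (2*(n+1)).choose (n+1) * (n+1)! * (n+1)! := e3.symm
    _ = catalan (n+1) * (n+2)! * (n+1)! := by
        rw [← e4, Nat.factorial_succ (n+1)]; ring

lemma dfact_real (n : ℕ) :
    ((2*n+1)‼ : ℝ) * 2^(n+1) = (catalan (n+1) : ℝ) * ((n+2)! : ℝ) := by
  exact_mod_cast congrArg (Nat.cast : ℕ → ℝ) (dfact_nat n)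

set_option maxHeartbeats 1600000 in
theorem stmt_15 (μ lam : ℝ) (hμ : 0 < μ) (hlam : 0 < lam) :
    Summable (fun n : ℕ =>
      (Nat.doubleFactorial (2 * (n + 2) - 3) : ℝ) * 2 ^ (n + 2 - 1) * μ ^ (n + 2) *
        lam ^ (n + 2 - 1) / ((Nat.factorial (n + 2) : ℝ) * (μ + lam) ^ (2 * (n + 2) - 1))) ∧
    μ / (μ + lam) +
      (∑' n : ℕ,
        (Nat.doubleFactorial (2 * (n + 2) - 3) : ℝ) * 2 ^ (n + 2 - 1) * μ ^ (n + 2) *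
          lam ^ (n + 2 - 1) / ((Nat.factorial (n + 2) : ℝ) * (μ + lam) ^ (2 * (n + 2) - 1))) =
      min (μ / lam) 1 ∧
    (lam ≤ μ →
      μ / (μ + lam) +
        (∑' n : ℕ,
          (Nat.doubleFactorial (2 * (n + 2) - 3) : ℝ) * 2 ^ (n + 2 - 1) * μ ^ (n + 2) *
            lam ^ (n + 2 - 1) / ((Nat.factorial (n + 2) : ℝ) * (μ + lam) ^ (2 * (n + 2) - 1))) =
        1) := by
  have hs : (0:ℝ) < μ + lam := by linarith
  set s : ℝ := μ + lam with hsdef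
  clear_value s
  obtain ⟨x, hxdef⟩ : ∃ x : ℝ, x = μ * lam / s^2 := ⟨_, rfl⟩
  have hx0 : 0 ≤ x := by rw [hxdef]; positivity
  have hx14 : x ≤ 1/4 := by
    rw [hxdef, div_le_iff₀ (by positivity)]
    nlinarith [sq_nonneg (μ - lam)]
  have hterm : ∀ n : ℕ,
      (Nat.doubleFactorial (2 * (n + 2) - 3) : ℝ) * 2 ^ (n + 2 - 1) * μ ^ (n + 2) *
        lam ^ (n + 2 - 1) / ((Nat.factorial (n + 2) : ℝ) * s ^ (2 * (n + 2) - 1))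
      = (s/lam) * ((catalan (n+1) : ℝ) * x^(n+1+1)) := by
    intro n
    have h1 : 2*(n+2)-3 = 2*n+1 := by omega
    have h2 : n+2-1 = n+1 := by omega
    have h3 : 2*(n+2)-1 = 2*n+3 := by omega
    rw [h1, h2, h3]
    have hf : ((n+2)! : ℝ) ≠ 0 := by exact_mod_cast (Nat.factorial_pos (n+2)).ne'
    rw [hxdef, div_pow, mul_pow]
    rw [div_eq_iff (by positivity)]
    field_simp
    rw [dfact_real n]
    ring
  have hgsum : Summable (fun k : ℕ => (catalan k : ℝ) * x^(k+1)) := cat_summable hx0 hx14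
  have hshift : Summable (fun n : ℕ => (catalan (n+1) : ℝ) * x^(n+1+1)) :=
    (summable_nat_add_iff 1).mpr hgsum
  have hsum : Summable (fun n : ℕ =>
      (Nat.doubleFactorial (2 * (n + 2) - 3) : ℝ) * 2 ^ (n + 2 - 1) * μ ^ (n + 2) *
        lam ^ (n + 2 - 1) / ((Nat.factorial (n + 2) : ℝ) * s ^ (2 * (n + 2) - 1))) := by
    simp only [hterm]
    exact hshift.mul_left _
  have htsum_shift : (∑' n : ℕ, (catalan (n+1) : ℝ) * x^(n+1+1))
      = (∑' k : ℕ, (catalan k : ℝ) * x^(k+1)) - x := by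
    have h0 := Summable.tsum_eq_zero_add hgsum
    simp only [catalan_zero, Nat.cast_one, one_mul, zero_add, pow_one] at h0
    linarith [h0]
  have hsqrt : Real.sqrt (1 - 4*x) = |μ - lam| / s := by
    have : 1 - 4*x = ((μ - lam)/s)^2 := by
      rw [hxdef]; field_simp; linear_combination (s + μ + lam) * hsdef
    rw [this, Real.sqrt_sq_eq_abs, abs_div, abs_of_pos hs]
  have hmain : μ / s +
      (∑' n : ℕ,
        (Nat.doubleFactorial (2 * (n + 2) - 3) : ℝ) * 2 ^ (n + 2 - 1) * μ ^ (n + 2) *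
          lam ^ (n + 2 - 1) / ((Nat.factorial (n + 2) : ℝ) * s ^ (2 * (n + 2) - 1)))
      = min (μ / lam) 1 := by
    have ht : (∑' n : ℕ,
        (Nat.doubleFactorial (2 * (n + 2) - 3) : ℝ) * 2 ^ (n + 2 - 1) * μ ^ (n + 2) *
          lam ^ (n + 2 - 1) / ((Nat.factorial (n + 2) : ℝ) * s ^ (2 * (n + 2) - 1)))
        = (s/lam) * ((∑' k : ℕ, (catalan k : ℝ) * x^(k+1)) - x) := by
      simp only [hterm]
      rw [tsum_mul_left, htsum_shift]
    rw [ht, cat_closed hx0 hx14, hsqrt]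
    rcases le_total lam μ with h | h
    · rw [abs_of_nonneg (by linarith), min_eq_right (by rw [le_div_iff₀ hlam]; linarith)]
      rw [hxdef]; field_simp; linear_combination s * hsdef
    · rw [abs_of_nonpos (by linarith), min_eq_left (by rw [div_le_one hlam]; linarith)]
      rw [hxdef]; field_simp; linear_combination s * hsdef
  refine ⟨hsum, hmain, fun h => ?_⟩
  rw [hmain, min_eq_right (by rw [le_div_iff₀ hlam]; linarith)]
end

section
/- For every v ∈ [0,1] the set {u ∈ [0,1] : 2qv − 3pu + u³ = 0} is nonempty; let ρ(v) denote its minimum. Then there exist nonnegative real numbers (ρ_k)_{k≥1} such that for every v ∈ [0,1) one has ρ(v) = Σ_{k=1}^∞ ρ_k v^k, and these coefficients satisfy ρ_1 = 2q/(3p), ρ_2 = 0, and for every n ≥ 2, ρ_{n+1} = (1/(p(n+1))) · Σ_{k=2}^{n} (n−k+1) ρ_{n−k+1} (Σ_{i=1}^{k−1} ρ_i ρ_{k−i}). -/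
open Finset PowerSeries

noncomputable def rr (p q : ℝ) : ℕ → ℝ
  | 0 => 0
  | 1 => 2 * q / (3 * p)
  | (n + 2) => (1 / (3 * p)) *
      ∑ a ∈ (Finset.Icc 1 n).attach,
        ∑ b ∈ (Finset.Icc 1 (n + 1 - a.1)).attach,
          rr p q a.1 * rr p q b.1 * rr p q (n + 2 - a.1 - b.1)
  termination_by n => n
  decreasing_by
  · have := (Finset.mem_Icc.mp a.2).2; omega
  · have ha := Finset.mem_Icc.mp a.2; have hb := Finset.mem_Icc.mp b.2; omega
  · have ha := Finset.mem_Icc.mp a.2; have hb := Finset.mem_Icc.mp b.2; omega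

lemma rr_zero (p q : ℝ) : rr p q 0 = 0 := by rw [rr]
lemma rr_one (p q : ℝ) : rr p q 1 = 2 * q / (3 * p) := by rw [rr]

lemma rr_add_two (p q : ℝ) (n : ℕ) : rr p q (n + 2) = (1 / (3 * p)) *
    ∑ a ∈ Finset.Icc 1 n, ∑ b ∈ Finset.Icc 1 (n + 1 - a),
      rr p q a * rr p q b * rr p q (n + 2 - a - b) := by
  rw [rr]
  congr 1
  rw [← Finset.sum_attach (Finset.Icc 1 n)
    (fun a => ∑ b ∈ Finset.Icc 1 (n + 1 - a), rr p q a * rr p q b * rr p q (n + 2 - a - b))]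
  exact Finset.sum_congr rfl fun a _ => by
    rw [← Finset.sum_attach (Finset.Icc 1 (n + 1 - a.1))
      (fun b => rr p q a.1 * rr p q b * rr p q (n + 2 - a.1 - b))]

lemma rr_nonneg {p q : ℝ} (hp : 0 < p) (hq : 0 < q) : ∀ n, 0 ≤ rr p q n := by
  intro n
  induction n using Nat.strong_induction_on with
  | _ n ih =>
    match n with
    | 0 => rw [rr_zero]
    | 1 => rw [rr_one]; positivity
    | (n + 2) =>
      rw [rr_add_two]
      apply mul_nonneg (by positivity)
      refine Finset.sum_nonneg fun a ha => Finset.sum_nonneg fun b hb => ?_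
      have ha' := Finset.mem_Icc.mp ha
      have hb' := Finset.mem_Icc.mp hb
      have h1 : a < n + 2 := by omega
      have h2 : b < n + 2 := by omega
      have h3 : n + 2 - a - b < n + 2 := by omega
      exact mul_nonneg (mul_nonneg (ih a h1) (ih b h2)) (ih _ h3)

lemma rr_two (p q : ℝ) : rr p q 2 = 0 := by
  rw [show (2:ℕ) = 0 + 2 by rfl, rr_add_two]; simp

lemma sum_anti_eq_Icc (f : ℕ → ℕ → ℝ) (n j : ℕ)
    (h0 : ∀ a, a < j → f a (n - a) = 0) :
    ∑ kl ∈ Finset.HasAntidiagonal.antidiagonal n, f kl.1 kl.2 = ∑ a ∈ Finset.Icc j n, f a (n - a) := by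
  rw [Finset.Nat.sum_antidiagonal_eq_sum_range_succ_mk]
  symm
  apply Finset.sum_subset
  · intro a ha
    simp only [Finset.mem_Icc] at ha
    simp only [Finset.mem_range]
    omega
  · intro a ha hna
    simp only [Finset.mem_range] at ha
    simp only [Finset.mem_Icc] at hna
    exact h0 a (by omega)

noncomputable def ss (p q : ℝ) (k : ℕ) : ℝ :=
  ∑ i ∈ Finset.Icc 1 (k - 1), rr p q i * rr p q (k - i)

noncomputable def tt (p q : ℝ) (n : ℕ) : ℝ :=
  ∑ a ∈ Finset.Icc 1 n, rr p q a * ss p q (n - a)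

lemma ss_zero (p q : ℝ) : ss p q 0 = 0 := by simp [ss]
lemma ss_one (p q : ℝ) : ss p q 1 = 0 := by simp [ss]

lemma coeff_F_sq (p q : ℝ) (k : ℕ) :
    (coeff k) ((PowerSeries.mk (rr p q)) ^ 2) = ss p q k := by
  rw [sq, coeff_mul]
  simp only [coeff_mk]
  rw [sum_anti_eq_Icc (fun a b => rr p q a * rr p q b) k 1
    (by intro a ha; interval_cases a; simp [rr_zero])]
  rw [ss]
  symm
  apply Finset.sum_subset
  · intro a ha; simp only [Finset.mem_Icc] at *; omega
  · intro a ha hna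
    simp only [Finset.mem_Icc] at ha hna
    have : a = k := by omega
    subst this
    simp [rr_zero]

lemma coeff_F_cube (p q : ℝ) (n : ℕ) :
    (coeff n) ((PowerSeries.mk (rr p q)) ^ 3) = tt p q n := by
  rw [pow_succ', coeff_mul]
  simp only [coeff_mk, coeff_F_sq]
  rw [sum_anti_eq_Icc (fun a b => rr p q a * ss p q b) n 1
    (by intro a ha; interval_cases a; simp [rr_zero])]
  rfl

lemma key_s16 (p q : ℝ) (hp : 0 < p) (n : ℕ) :
    3 * p * rr p q n = tt p q n + (if n = 1 then 2 * q else 0) := by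
  match n with
  | 0 => simp [rr_zero, tt]
  | 1 =>
    have : tt p q 1 = 0 := by simp [tt, ss_zero]
    rw [this, rr_one]
    field_simp
    simp
  | (n + 2) =>
    have htt : tt p q (n + 2) =
        ∑ a ∈ Finset.Icc 1 n, ∑ b ∈ Finset.Icc 1 (n + 1 - a),
          rr p q a * rr p q b * rr p q (n + 2 - a - b) := by
      rw [tt]
      rw [show ∑ a ∈ Finset.Icc 1 (n+2), rr p q a * ss p q (n + 2 - a)
          = ∑ a ∈ Finset.Icc 1 n, rr p q a * ss p q (n + 2 - a) by
        symm
        apply Finset.sum_subset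
        · intro a ha; simp only [Finset.mem_Icc] at *; omega
        · intro a ha hna
          simp only [Finset.mem_Icc] at ha hna
          have : a = n + 1 ∨ a = n + 2 := by omega
          rcases this with h | h <;> subst h
          · simp [show n + 2 - (n+1) = 1 by omega, ss_one]
          · simp [ss_zero]]
      apply Finset.sum_congr rfl
      intro a ha
      simp only [Finset.mem_Icc] at ha
      rw [ss, Finset.mul_sum]
      rw [show n + 2 - a - 1 = n + 1 - a by omega]
      exact Finset.sum_congr rfl fun b _ => by ring
    rw [htt, rr_add_two]
    have h3p : (3 : ℝ) * p ≠ 0 := by positivity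
    field_simp
    simp

lemma Fcube_eq (p q : ℝ) (hp : 0 < p) :
    (PowerSeries.mk (rr p q)) ^ 3 + (C (2 * q)) * X = C (3 * p) * PowerSeries.mk (rr p q) := by
  ext n
  rw [map_add, coeff_F_cube, coeff_C_mul, coeff_C_mul, coeff_mk, coeff_X]
  rw [key_s16 p q hp n, mul_ite, mul_one, mul_zero]

lemma my_deriv_eq (p q : ℝ) (hp : 0 < p) :
    (3 : ℕ) • ((PowerSeries.mk (rr p q)) ^ 2 * (d⁄dX ℝ) (PowerSeries.mk (rr p q))) + C (2 * q)
      = C (3 * p) * (d⁄dX ℝ) (PowerSeries.mk (rr p q)) := by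
  have h := congrArg (d⁄dX ℝ) (Fcube_eq p q hp)
  rw [map_add, Derivation.leibniz_pow, Derivation.leibniz, Derivation.leibniz,
    derivative_C, derivative_X] at h
  simpa [smul_eq_mul] using h

lemma rr_rec (p q : ℝ) (hp : 0 < p) (n : ℕ) (hn : 1 ≤ n) :
    rr p q (n + 1) = (1 / (p * (n + 1))) *
      ∑ k ∈ Finset.Icc 2 n, ((n - k + 1 : ℕ) : ℝ) * rr p q (n - k + 1) * ss p q k := by
  have h := congrArg (coeff n) (my_deriv_eq p q hp)
  rw [map_add, map_nsmul, coeff_mul, coeff_C_mul, coeff_C] at h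
  simp only [coeff_F_sq, coeff_derivative, coeff_mk] at h
  rw [if_neg (by omega), add_zero] at h
  rw [sum_anti_eq_Icc (fun k m => ss p q k * (rr p q (m + 1) * (m + 1))) n 2
    (by intro a ha; interval_cases a <;> simp [ss_zero, ss_one])] at h
  have hsum : ∑ a ∈ Finset.Icc 2 n, ss p q a * (rr p q (n - a + 1) * ((n - a : ℕ) + 1))
      = ∑ k ∈ Finset.Icc 2 n, ((n - k + 1 : ℕ) : ℝ) * rr p q (n - k + 1) * ss p q k := by
    apply Finset.sum_congr rfl
    intro k hk
    push_cast
    ring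
  rw [hsum] at h
  have hne : (p : ℝ) * (n + 1) ≠ 0 := by positivity
  have h3 : (3:ℕ) • (∑ k ∈ Finset.Icc 2 n, ((n - k + 1 : ℕ) : ℝ) * rr p q (n - k + 1) * ss p q k)
      = 3 * p * (rr p q (n+1) * (n+1)) := h
  rw [nsmul_eq_mul] at h3
  push_cast at h3 ⊢
  field_simp
  linarith [h3]

lemma tri (f : ℕ → ℕ → ℝ) (N : ℕ) :
    ∑ n ∈ range N, ∑ a ∈ range (n + 1), f a (n - a)
      = ∑ a ∈ range N, ∑ m ∈ range (N - a), f a m := by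
  induction N with
  | zero => simp
  | succ N ih =>
    rw [Finset.sum_range_succ, ih,
      Finset.sum_range_succ (fun a => ∑ m ∈ range (N + 1 - a), f a m) N,
      Finset.sum_range_succ (fun a => f a (N - a)) N]
    have h1 : ∀ a ∈ range N, ∑ m ∈ range (N + 1 - a), f a m
        = ∑ m ∈ range (N - a), f a m + f a (N - a) := by
      intro a ha
      simp only [Finset.mem_range] at ha
      rw [show N + 1 - a = (N - a) + 1 by omega, Finset.sum_range_succ]
    rw [Finset.sum_congr rfl h1, Finset.sum_add_distrib]
    simp only [Nat.sub_self, Nat.add_sub_cancel_left]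
    rw [Finset.sum_range_one]
    ring

section anal
variable {p q v : ℝ} (hp : 0 < p) (hq : 0 < q) (hv : 0 ≤ v)

lemma ss_mul (m : ℕ) : ss p q m * v ^ m
    = ∑ b ∈ Finset.Icc 1 (m - 1), (rr p q b * v ^ b) * (rr p q (m - b) * v ^ (m - b)) := by
  rw [ss, Finset.sum_mul]
  apply Finset.sum_congr rfl
  intro b hb
  simp only [Finset.mem_Icc] at hb
  have hbm : b ≤ m := by omega
  rw [show v ^ m = v ^ b * v ^ (m - b) by rw [← pow_add]; congr 1; omega]
  ring

lemma tt_mul (n : ℕ) : tt p q n * v ^ n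
    = ∑ a ∈ Finset.Icc 1 n, (rr p q a * v ^ a) * (ss p q (n - a) * v ^ (n - a)) := by
  rw [tt, Finset.sum_mul]
  apply Finset.sum_congr rfl
  intro a ha
  simp only [Finset.mem_Icc] at ha
  rw [show v ^ n = v ^ a * v ^ (n - a) by rw [← pow_add]; congr 1; omega]
  ring

set_option maxHeartbeats 1000000 in
include hp hq hv in
lemma cube_bound (N : ℕ) :
    ∑ n ∈ range N, tt p q n * v ^ n ≤ (∑ k ∈ range N, rr p q k * v ^ k) ^ 3 := by
  set c : ℕ → ℝ := fun k => rr p q k * v ^ k with hc_def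
  have hc : ∀ k, 0 ≤ c k := fun k => mul_nonneg (rr_nonneg hp hq k) (pow_nonneg hv k)
  have htt : ∀ n, tt p q n * v ^ n
      ≤ ∑ a ∈ range (n + 1), c a * ∑ b ∈ range ((n - a) + 1), c b * c (n - a - b) := by
    intro n
    rw [tt_mul]
    have step1 : ∀ a, ss p q (n - a) * v ^ (n - a)
        ≤ ∑ b ∈ range ((n - a) + 1), c b * c (n - a - b) := by
      intro a
      rw [ss_mul]
      apply Finset.sum_le_sum_of_subset_of_nonneg
      · intro b hb
        simp only [Finset.mem_Icc] at hb
        simp only [Finset.mem_range]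
        omega
      · intro b _ _
        exact mul_nonneg (hc b) (hc _)
    calc ∑ a ∈ Finset.Icc 1 n, c a * (ss p q (n - a) * v ^ (n - a))
        ≤ ∑ a ∈ Finset.Icc 1 n, c a * ∑ b ∈ range ((n - a) + 1), c b * c (n - a - b) := by
          apply Finset.sum_le_sum
          intro a _
          exact mul_le_mul_of_nonneg_left (step1 a) (hc a)
      _ ≤ ∑ a ∈ range (n + 1), c a * ∑ b ∈ range ((n - a) + 1), c b * c (n - a - b) := by
          apply Finset.sum_le_sum_of_subset_of_nonneg
          · intro a ha
            simp only [Finset.mem_Icc] at ha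
            simp only [Finset.mem_range]
            omega
          · intro a _ _
            exact mul_nonneg (hc a) (Finset.sum_nonneg fun b _ => mul_nonneg (hc b) (hc _))
  calc ∑ n ∈ range N, tt p q n * v ^ n
      ≤ ∑ n ∈ range N, ∑ a ∈ range (n + 1),
          (fun a m => c a * ∑ b ∈ range (m + 1), c b * c (m - b)) a (n - a) :=
        Finset.sum_le_sum fun n _ => htt n
    _ = ∑ a ∈ range N, ∑ m ∈ range (N - a), c a * ∑ b ∈ range (m + 1), c b * c (m - b) :=
        tri (fun a m => c a * ∑ b ∈ range (m + 1), c b * c (m - b)) N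
    _ ≤ ∑ a ∈ range N, c a * (∑ k ∈ range N, c k) ^ 2 := by
        apply Finset.sum_le_sum
        intro a _
        rw [← Finset.mul_sum]
        apply mul_le_mul_of_nonneg_left _ (hc a)
        rw [tri (fun b j => c b * c j) (N - a)]
        calc ∑ b ∈ range (N - a), ∑ j ∈ range (N - a - b), c b * c j
            ≤ ∑ b ∈ range (N - a), ∑ j ∈ range N, c b * c j := by
              apply Finset.sum_le_sum
              intro b _
              apply Finset.sum_le_sum_of_subset_of_nonneg
              · apply Finset.range_subset_range.mpr; omega
              · intro j _ _; exact mul_nonneg (hc b) (hc j)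
          _ ≤ ∑ b ∈ range N, ∑ j ∈ range N, c b * c j := by
              apply Finset.sum_le_sum_of_subset_of_nonneg
              · apply Finset.range_subset_range.mpr; omega
              · intro b _ _
                exact Finset.sum_nonneg fun j _ => mul_nonneg (hc b) (hc j)
          _ = (∑ k ∈ range N, c k) ^ 2 := by
              rw [sq, Finset.sum_mul_sum]
    _ = (∑ k ∈ range N, c k) ^ 3 := by
        rw [← Finset.sum_mul]
        ring

include hp hq hv in
lemma psum_ineq (N : ℕ) :
    3 * p * (∑ k ∈ range N, rr p q k * v ^ k)
      ≤ (∑ k ∈ range N, rr p q k * v ^ k) ^ 3 + 2 * q * v := by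
  have h1 : 3 * p * (∑ k ∈ range N, rr p q k * v ^ k)
      = ∑ n ∈ range N, tt p q n * v ^ n
        + ∑ n ∈ range N, (if n = 1 then 2 * q else 0) * v ^ n := by
    rw [Finset.mul_sum, ← Finset.sum_add_distrib]
    apply Finset.sum_congr rfl
    intro n _
    rw [← mul_assoc, key_s16 p q hp n]
    ring
  have h2 : ∑ n ∈ range N, (if n = 1 then 2 * q else 0) * v ^ n ≤ 2 * q * v := by
    have : ∀ n ∈ range N, (if n = 1 then 2 * q else 0) * v ^ n
        = if n = 1 then 2 * q * v else 0 := by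
      intro n _
      split <;> simp_all
    rw [Finset.sum_congr rfl this, Finset.sum_ite_eq' (range N) 1 (fun _ => 2 * q * v)]
    split
    · simp
    · positivity
  linarith [cube_bound hp hq hv N, h2]


include hp in
lemma phi_anti (a b : ℝ) (ha : 0 ≤ a) (hab : a < b) (hb : b ≤ Real.sqrt p) :
    2 * q * v - 3 * p * b + b ^ 3 < 2 * q * v - 3 * p * a + a ^ 3 := by
  have h1 : Real.sqrt p ^ 2 = p := Real.sq_sqrt hp.le
  have hs : a < Real.sqrt p := lt_of_lt_of_le hab hb
  have hb0 : 0 < b := lt_of_le_of_lt ha hab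
  have h2 : b ^ 2 ≤ p := by nlinarith [Real.sqrt_nonneg p]
  have h3 : a ^ 2 < p := by nlinarith [Real.sqrt_nonneg p]
  have h4 : a * b < p := by
    nlinarith [mul_le_mul_of_nonneg_left hb (Real.sqrt_nonneg p),
      mul_lt_mul_of_pos_right hs hb0]
  nlinarith [mul_pos (sub_pos.2 hab) (by nlinarith : (0:ℝ) < 3 * p - (a ^ 2 + a * b + b ^ 2))]

include hp hq in
lemma phi_sqrt_neg (hpq : 3 * p = 2 * q + 1) (hv0 : 0 ≤ v) (hv1 : v < 1) :
    2 * q * v - 3 * p * Real.sqrt p + (Real.sqrt p) ^ 3 < 0 := by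
  have h1 : Real.sqrt p ^ 2 = p := Real.sq_sqrt hp.le
  have h2 : 0 < Real.sqrt p := Real.sqrt_pos.mpr hp
  nlinarith [mul_nonneg (sq_nonneg (Real.sqrt p - 1)) (by positivity : (0:ℝ) ≤ 2 * Real.sqrt p + 1)]

include hp hq in
lemma psum_lt_sqrt (hpq : 3 * p = 2 * q + 1) (hv0 : 0 ≤ v) (hv1 : v < 1) (N : ℕ) :
    ∑ k ∈ range N, rr p q k * v ^ k < Real.sqrt p := by
  by_contra hcon
  push_neg at hcon
  set f : ℝ → ℝ := fun w => ∑ k ∈ range N, rr p q k * w ^ k with hf_def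
  have hcont : Continuous f := by
    apply continuous_finset_sum
    intro k _
    exact continuous_const.mul (continuous_pow k)
  have h0 : f 0 = 0 := by
    apply Finset.sum_eq_zero
    intro k _
    rcases Nat.eq_zero_or_pos k with h | h
    · simp [h, rr_zero]
    · simp [zero_pow (Nat.pos_iff_ne_zero.mp h)]
  have hmem : Real.sqrt p ∈ Set.Icc (f 0) (f v) := by
    constructor
    · rw [h0]; exact Real.sqrt_nonneg p
    · exact hcon
  obtain ⟨w, hw, hfw⟩ := intermediate_value_Icc hv0 hcont.continuousOn hmem
  have h1 := psum_ineq hp hq hw.1 N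
  rw [show ∑ k ∈ range N, rr p q k * w ^ k = f w from rfl, hfw] at h1
  have h2 := phi_sqrt_neg hp hq hpq hw.1 (lt_of_le_of_lt hw.2 hv1)
  have hqw : q * w ≤ q * v := mul_le_mul_of_nonneg_left hw.2 hq.le
  linarith

include hp hq in
lemma summable_c (hpq : 3 * p = 2 * q + 1) (hv0 : 0 ≤ v) (hv1 : v < 1) :
    Summable (fun k => rr p q k * v ^ k) :=
  summable_of_sum_range_le
    (fun k => mul_nonneg (rr_nonneg hp hq k) (pow_nonneg hv0 k))
    (fun n => (psum_lt_sqrt hp hq hpq hv0 hv1 n).le)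

include hp hq in
lemma tsum_cube (hpq : 3 * p = 2 * q + 1) (hv0 : 0 ≤ v) (hv1 : v < 1) :
    (∑' k, rr p q k * v ^ k) ^ 3 = 3 * p * (∑' k, rr p q k * v ^ k) - 2 * q * v := by
  set c : ℕ → ℝ := fun k => rr p q k * v ^ k with hc_def
  have hc : ∀ k, 0 ≤ c k := fun k => mul_nonneg (rr_nonneg hp hq k) (pow_nonneg hv0 k)
  have hc0 : c 0 = 0 := by simp [hc_def, rr_zero]
  have hsum : Summable c := summable_c hp hq hpq hv0 hv1
  have hnorm : Summable (fun k => ‖c k‖) := by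
    have : (fun k => ‖c k‖) = c := funext fun k => Real.norm_of_nonneg (hc k)
    rw [this]; exact hsum
  set L : ℝ := ∑' k, c k with hL_def
  set g : ℕ → ℝ := fun n => ∑ kl ∈ Finset.HasAntidiagonal.antidiagonal n, c kl.1 * c kl.2 with hg_def
  have h1 : L * L = ∑' n, g n :=
    tsum_mul_tsum_eq_tsum_sum_antidiagonal_of_summable_norm hnorm hnorm
  have hgnorm : Summable (fun n => ‖g n‖) :=
    summable_norm_sum_mul_antidiagonal_of_summable_norm hnorm hnorm
  have h2 : L * ∑' n, g n = ∑' n, ∑ kl ∈ Finset.HasAntidiagonal.antidiagonal n, c kl.1 * g kl.2 :=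
    tsum_mul_tsum_eq_tsum_sum_antidiagonal_of_summable_norm hnorm hgnorm
  have hg_eq : ∀ m, g m = ss p q m * v ^ m := by
    intro m
    show ∑ kl ∈ Finset.HasAntidiagonal.antidiagonal m, c kl.1 * c kl.2 = ss p q m * v ^ m
    rw [sum_anti_eq_Icc (fun a b => c a * c b) m 1 (by intro a ha; interval_cases a; simp [hc0])]
    rw [ss_mul (v := v) m]
    symm
    apply Finset.sum_subset
    · intro b hb; simp only [Finset.mem_Icc] at *; omega
    · intro b hb hnb
      simp only [Finset.mem_Icc] at hb hnb
      have : b = m := by omega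
      subst this
      simp [rr_zero]
  have htau : ∀ n, ∑ kl ∈ Finset.HasAntidiagonal.antidiagonal n, c kl.1 * g kl.2 = tt p q n * v ^ n := by
    intro n
    rw [sum_anti_eq_Icc (fun a b => c a * g b) n 1 (by intro a ha; interval_cases a; simp [hc0])]
    rw [tt_mul (v := v) n]
    apply Finset.sum_congr rfl
    intro a _
    rw [hg_eq]
  have hsum_t : HasSum (fun n => tt p q n * v ^ n) (3 * p * L - 2 * q * v) := by
    have hA : HasSum (fun n => 3 * p * c n) (3 * p * L) := hsum.hasSum.mul_left _
    have hB : HasSum (fun n : ℕ => if n = 1 then 2 * q * v else 0) (2 * q * v) :=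
      hasSum_ite_eq 1 _
    have hAB := hA.sub hB
    convert hAB using 1
    · rfl
    funext n
    have hk := key_s16 p q hp n
    have : tt p q n = 3 * p * rr p q n - (if n = 1 then 2 * q else 0) := by linarith
    rw [this]
    rcases eq_or_ne n 1 with h | h
    · subst h; simp [hc_def]; ring
    · simp [h, hc_def]; ring
  have h3 : L * (L * L) = 3 * p * L - 2 * q * v := by
    rw [h1, h2, tsum_congr htau, hsum_t.tsum_eq]
  rw [← h3]; ring

end anal

theorem stmt_16 (p q : ℝ) (hp : 0 < p) (hq : 0 < q) (hpq : 3 * p = 2 * q + 1) :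
    (∀ v ∈ Set.Icc (0:ℝ) 1,
      {u ∈ Set.Icc (0:ℝ) 1 | 2 * q * v - 3 * p * u + u ^ 3 = 0}.Nonempty) ∧
    ∃ r : ℕ → ℝ,
      (∀ k, 1 ≤ k → 0 ≤ r k) ∧
      (∀ v ∈ Set.Ico (0:ℝ) 1, ∀ ρv : ℝ,
        IsLeast {u ∈ Set.Icc (0:ℝ) 1 | 2 * q * v - 3 * p * u + u ^ 3 = 0} ρv →
        HasSum (fun k : ℕ => r (k + 1) * v ^ (k + 1)) ρv) ∧
      r 1 = 2 * q / (3 * p) ∧ r 2 = 0 ∧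
      ∀ n : ℕ, 2 ≤ n →
        r (n + 1) = (1 / (p * (n + 1))) *
          ∑ k ∈ Finset.Icc 2 n,
            ((n - k + 1 : ℕ) : ℝ) * r (n - k + 1) *
              ∑ i ∈ Finset.Icc 1 (k - 1), r i * r (k - i) := by
  constructor
  · -- nonemptiness via IVT
    intro v hv
    set f : ℝ → ℝ := fun u => 2 * q * v - 3 * p * u + u ^ 3 with hf_def
    have hcont : Continuous f := by
      apply Continuous.add
      · exact (continuous_const.sub (continuous_const.mul continuous_id))
      · exact continuous_pow 3
    have hmem : (0:ℝ) ∈ Set.Icc (f 1) (f 0) := by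
      constructor
      · show 2 * q * v - 3 * p * 1 + 1 ^ 3 ≤ 0
        have := hv.2
        nlinarith
      · show (0:ℝ) ≤ 2 * q * v - 3 * p * 0 + 0 ^ 3
        have := hv.1
        nlinarith
    obtain ⟨u, hu, hfu⟩ := intermediate_value_Icc' (by norm_num : (0:ℝ) ≤ 1)
      hcont.continuousOn hmem
    exact ⟨u, hu, hfu⟩
  · refine ⟨rr p q, fun k _ => rr_nonneg hp hq k, ?_, rr_one p q, rr_two p q, ?_⟩
    · -- HasSum part
      intro v hv ρv hleast
      have hv0 : 0 ≤ v := hv.1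
      have hv1 : v < 1 := hv.2
      set c : ℕ → ℝ := fun k => rr p q k * v ^ k with hc_def
      have hc : ∀ k, 0 ≤ c k := fun k => mul_nonneg (rr_nonneg hp hq k) (pow_nonneg hv0 k)
      have hsum : Summable c := summable_c hp hq hpq hv0 hv1
      set L : ℝ := ∑' k, c k with hL_def
      have hL3 : L ^ 3 = 3 * p * L - 2 * q * v := tsum_cube hp hq hpq hv0 hv1
      have hL0 : 0 ≤ L := tsum_nonneg hc
      have hLs : L ≤ Real.sqrt p :=
        Real.tsum_le_of_sum_range_le hc (fun n => (psum_lt_sqrt hp hq hpq hv0 hv1 n).le)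
      have hLne : L ≠ Real.sqrt p := by
        intro h
        have := phi_sqrt_neg (v := v) hp hq hpq hv0 hv1
        rw [← h] at this
        linarith
      have hL1 : L ≤ 1 := by
        by_contra h
        push_neg at h
        have h2 := phi_anti (q := q) (v := v) hp 1 L (by norm_num) h hLs
        have h3 : 2 * q * v - 3 * p * 1 + 1 ^ 3 = 2 * q * (v - 1) := by linarith
        nlinarith
      have hmemL : L ∈ {u ∈ Set.Icc (0:ℝ) 1 | 2 * q * v - 3 * p * u + u ^ 3 = 0} := by
        refine ⟨⟨hL0, hL1⟩, ?_⟩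
        linarith
      have hρL : ρv ≤ L := hleast.2 hmemL
      have hρ0 : 0 ≤ ρv := hleast.1.1.1
      have hφρ : 2 * q * v - 3 * p * ρv + ρv ^ 3 = 0 := hleast.1.2
      have hLρ : L ≤ ρv := by
        by_contra h
        push_neg at h
        have := phi_anti (q := q) (v := v) hp ρv L hρ0 h hLs
        rw [hφρ] at this
        linarith
      have hρeq : ρv = L := le_antisymm hρL hLρ
      subst hρeq
      have hc0 : c 0 = 0 := by simp [hc_def, rr_zero]
      refine (hasSum_nat_add_iff (f := c) 1).mpr ?_
      simpa [hc0] using hsum.hasSum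
    · -- recursion
      intro n hn
      have h := rr_rec p q hp n (by omega)
      rw [h]
      rfl
end
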